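/- arXiv:2005.02915 — 4 statements merged into one kernel-verified Lean document; each statement's English description precedes it below -/
import Mathlib

section
/- Let {X_j} be a sequence of zero-mean ℝ^d-valued random vectors, uniformly bounded in the sup norm, with φ(n₀) < 1/2 for some n₀ ∈ ℕ. Fix a unit vector u₀ ∈ ℝ^d and for a finite set M ⊂ ℕ put S(M) = Σ_{j∈M} X_j · u₀. Fix p > 2 and let C_p be the constant for which |Cov(S(M₁), S(M₂))| ≤ C_p (1+‖S(M₁)‖_{L²})(1+‖S(M₂)‖_{L²})(α(r))^{1−2/p} whenever min M₂ − max M₁ ≥ r. Let r ∈ ℕ be such that Σ_{m=1}^∞ (α(rm))^{1−2/p} < 1/(32 C_p). Then for any integer k ≥ 1 and any finite r-separated blocks M₁ < M₂ < … < M_k (i.e., m_i ≤ m_j − r for all i < j, m_i ∈ M_i, m_j ∈ M_j) such that ‖S(M_i)‖_{L²} ≥ 1 for every i, one has (1/2) Σ_{i=1}^k Var(S(M_i)) ≤ Var(S(M₁ ∪ M₂ ∪ … ∪ M_k)) ≤ (3/2) Σ_{i=1}^k Var(S(M_i)). -/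
/- Statement 4: variance of a union of r-separated blocks is comparable with the
sum of the variances (Lemma 2). -/

open MeasureTheory ProbabilityTheory Filter Finset
open scoped NNReal ENNReal

noncomputable section

/-- The σ-algebra generated by `X_0, …, X_j`. -/
def pastSigma {Ω E : Type*} [MeasurableSpace E] (X : ℕ → Ω → E) (j : ℕ) :
    MeasurableSpace Ω :=
  ⨆ i ∈ Set.Iic j, MeasurableSpace.comap (X i) inferInstance

/-- The σ-algebra generated by `X_i, i ≥ j`. -/
def futureSigma {Ω E : Type*} [MeasurableSpace E] (X : ℕ → Ω → E) (j : ℕ) :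
    MeasurableSpace Ω :=
  ⨆ i ∈ Set.Ici j, MeasurableSpace.comap (X i) inferInstance

/-- The strong (α) mixing coefficients of the sequence `X`. -/
def alphaMix {Ω E : Type*} [MeasurableSpace Ω] [MeasurableSpace E]
    (P : Measure Ω) (X : ℕ → Ω → E) (k : ℕ) : ℝ :=
  sSup { r | ∃ j, ∃ A B : Set Ω, MeasurableSet[pastSigma X j] A ∧
    MeasurableSet[futureSigma X (j + k)] B ∧
    r = |(P (A ∩ B)).toReal - (P A).toReal * (P B).toReal| }

/-- The φ-mixing coefficients of the sequence `X`. -/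
def phiMix {Ω E : Type*} [MeasurableSpace Ω] [MeasurableSpace E]
    (P : Measure Ω) (X : ℕ → Ω → E) (k : ℕ) : ℝ :=
  sSup { r | ∃ j, ∃ A B : Set Ω, MeasurableSet[pastSigma X j] A ∧
    MeasurableSet[futureSigma X (j + k)] B ∧ 0 < P A ∧
    r = |(P (A ∩ B)).toReal / (P A).toReal - (P B).toReal| }

/-- Covariance of two real-valued random variables. -/
def covR {Ω : Type*} [MeasurableSpace Ω] (P : Measure Ω) (f g : Ω → ℝ) : ℝ :=
  (∫ ω, f ω * g ω ∂P) - (∫ ω, f ω ∂P) * ∫ ω, g ω ∂P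

/-- The L² norm (as a real number) of a real-valued random variable. -/
def l2norm {Ω : Type*} [MeasurableSpace Ω] (P : Measure Ω) (f : Ω → ℝ) : ℝ :=
  (eLpNorm f 2 P).toReal

/-- auxiliary: α-mixing coefficients are nonnegative. -/
lemma alphaMix_nonneg' {Ω E : Type*} [MeasurableSpace Ω] [MeasurableSpace E]
    (P : Measure Ω) [IsProbabilityMeasure P] (X : ℕ → Ω → E) (k : ℕ) :
    0 ≤ alphaMix P X k := by
  apply le_csSup
  · refine ⟨1, ?_⟩
    rintro x ⟨j, A, B, hA, hB, rfl⟩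
    have h1 : (P (A ∩ B)).toReal ≤ 1 := by
      have := prob_le_one (μ := P) (s := A ∩ B)
      simpa using ENNReal.toReal_mono ENNReal.one_ne_top this
    have h2 : (P A).toReal ≤ 1 := by
      have := prob_le_one (μ := P) (s := A)
      simpa using ENNReal.toReal_mono ENNReal.one_ne_top this
    have h3 : (P B).toReal ≤ 1 := by
      have := prob_le_one (μ := P) (s := B)
      simpa using ENNReal.toReal_mono ENNReal.one_ne_top this
    have h4 : 0 ≤ (P (A ∩ B)).toReal := ENNReal.toReal_nonneg
    have h5 : 0 ≤ (P A).toReal := ENNReal.toReal_nonneg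
    have h6 : 0 ≤ (P B).toReal := ENNReal.toReal_nonneg
    rw [abs_le]
    constructor <;> nlinarith
  · exact ⟨0, ∅, ∅, @MeasurableSet.empty _ (pastSigma X 0),
      @MeasurableSet.empty _ (futureSigma X (0 + k)), by simp⟩

/-- auxiliary: square of the L² norm is the integral of the square. -/
lemma l2norm_sq' {Ω : Type*} [MeasurableSpace Ω] (P : Measure Ω) [IsProbabilityMeasure P]
    {g : Ω → ℝ} (hg : MemLp g 2 P) : (l2norm P g) ^ 2 = ∫ ω, g ω ^ 2 ∂P := by
  rw [l2norm, hg.eLpNorm_eq_integral_rpow_norm two_ne_zero ENNReal.ofNat_ne_top]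
  rw [ENNReal.toReal_ofReal (by positivity)]
  have h2 : (2 : ℝ≥0∞).toReal = (2 : ℝ) := by simp
  rw [h2]
  have hnn : 0 ≤ ∫ a, ‖g a‖ ^ (2 : ℝ) ∂P := by positivity
  rw [← Real.rpow_natCast (((∫ a, ‖g a‖ ^ (2 : ℝ) ∂P) ^ (2 : ℝ)⁻¹)) 2, ← Real.rpow_mul hnn]
  norm_num

theorem variance_union_separated_blocks
    {Ω : Type*} [MeasurableSpace Ω] (P : Measure Ω) [IsProbabilityMeasure P]
    {d : ℕ} (X : ℕ → Ω → EuclideanSpace ℝ (Fin d))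
    (hmeas : ∀ n, Measurable (X n))
    (hzero : ∀ n, ∫ ω, X n ω ∂P = 0)
    (L : ℝ) (hbdd : ∀ n ω, ‖X n ω‖ ≤ L)
    (n₀ : ℕ) (hφ : phiMix P X n₀ < 1 / 2)
    (u₀ : EuclideanSpace ℝ (Fin d)) (hu₀ : ‖u₀‖ = 1)
    (p : ℝ) (hp : 2 < p)
    -- C_p : the constant of the covariance inequality of Lemma 1
    (Cp : ℝ) (hCp_pos : 0 < Cp)
    (hCp : ∀ (r : ℕ) (M₁ M₂ : Finset ℕ), M₁.Nonempty → M₂.Nonempty →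
      (∀ i ∈ M₁, ∀ j ∈ M₂, i + r ≤ j) →
      |covR P (fun ω => ∑ j ∈ M₁, (inner ℝ u₀ (X j ω) : ℝ))
          (fun ω => ∑ j ∈ M₂, (inner ℝ u₀ (X j ω) : ℝ))| ≤
        Cp * (1 + l2norm P (fun ω => ∑ j ∈ M₁, (inner ℝ u₀ (X j ω) : ℝ))) *
          (1 + l2norm P (fun ω => ∑ j ∈ M₂, (inner ℝ u₀ (X j ω) : ℝ))) *
          (alphaMix P X r) ^ (1 - 2 / p))
    -- r is chosen so that ∑_{m≥1} α(rm)^{1−2/p} < 1/(32 C_p)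
    (r : ℕ)
    (hsum : Summable fun m : ℕ => (alphaMix P X (r * (m + 1))) ^ (1 - 2 / p))
    (hr : (∑' m : ℕ, (alphaMix P X (r * (m + 1))) ^ (1 - 2 / p)) < 1 / (32 * Cp))
    -- the r-separated blocks M₁ < M₂ < … < M_k
    (k : ℕ) (hk : 1 ≤ k) (M : Fin k → Finset ℕ)
    (hMne : ∀ i, (M i).Nonempty)
    (hsep : ∀ i j : Fin k, i < j → ∀ x ∈ M i, ∀ y ∈ M j, x + r ≤ y)
    (hl2 : ∀ i, 1 ≤ l2norm P (fun ω => ∑ j ∈ M i, (inner ℝ u₀ (X j ω) : ℝ))) :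
    (1 / 2) * (∑ i : Fin k,
        variance (fun ω => ∑ j ∈ M i, (inner ℝ u₀ (X j ω) : ℝ)) P) ≤
      variance (fun ω => ∑ j ∈ Finset.univ.biUnion M, (inner ℝ u₀ (X j ω) : ℝ)) P ∧
    variance (fun ω => ∑ j ∈ Finset.univ.biUnion M, (inner ℝ u₀ (X j ω) : ℝ)) P ≤
      (3 / 2) * ∑ i : Fin k,
        variance (fun ω => ∑ j ∈ M i, (inner ℝ u₀ (X j ω) : ℝ)) P := by
  classical
  -- abbreviations
  set a : ℕ → ℝ := fun m => (alphaMix P X (r * (m + 1))) ^ (1 - 2 / p) with ha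
  set f : ℕ → Ω → ℝ := fun j ω => (inner ℝ u₀ (X j ω) : ℝ) with hfdef
  set S : Finset ℕ → Ω → ℝ := fun F ω => ∑ j ∈ F, f j ω with hSdef
  have hΩ : Nonempty Ω := by
    by_contra h
    have h1 : P Set.univ = 1 := measure_univ
    rw [Set.univ_eq_empty_iff.2 (not_nonempty_iff.1 h), measure_empty] at h1
    simp at h1
  have hL0 : 0 ≤ L := le_trans (norm_nonneg _) (hbdd 0 hΩ.some)
  have hfm : ∀ j, Measurable (f j) := fun j =>
    ((continuous_const.inner continuous_id).measurable).comp (hmeas j)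
  have hfb : ∀ j ω, |f j ω| ≤ L := by
    intro j ω
    calc |f j ω| ≤ ‖u₀‖ * ‖X j ω‖ := abs_real_inner_le_norm _ _
      _ = ‖X j ω‖ := by rw [hu₀, one_mul]
      _ ≤ L := hbdd j ω
  have hbint : ∀ (g : Ω → ℝ) (C : ℝ), Measurable g → (∀ ω, |g ω| ≤ C) → Integrable g P :=
    fun g C hg hC => (integrable_const C).mono' hg.aestronglyMeasurable
      (ae_of_all _ fun ω => by simpa [Real.norm_eq_abs] using hC ω)
  have hfint : ∀ j, Integrable (f j) P := fun j => hbint (f j) L (hfm j) (hfb j)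
  have hSm : ∀ F, Measurable (S F) := fun F => Finset.measurable_sum F fun j _ => hfm j
  have hSb : ∀ F ω, |S F ω| ≤ F.card * L := by
    intro F ω
    calc |S F ω| ≤ ∑ j ∈ F, |f j ω| := Finset.abs_sum_le_sum_abs _ _
      _ ≤ ∑ j ∈ F, L := Finset.sum_le_sum fun j _ => hfb j ω
      _ = F.card * L := by rw [Finset.sum_const, nsmul_eq_mul]
  have hS2 : ∀ F, MemLp (S F) 2 P := fun F =>
    MemLp.of_bound (hSm F).aestronglyMeasurable _
      (ae_of_all _ fun ω => by simpa [Real.norm_eq_abs] using hSb F ω)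
  have hSint : ∀ F, Integrable (S F) P := fun F =>
    hbint (S F) (F.card * L) (hSm F) (hSb F)
  have hXint : ∀ j, Integrable (X j) P := fun j =>
    (integrable_const L).mono' (hmeas j).aestronglyMeasurable
      (ae_of_all _ fun ω => hbdd j ω)
  have hfzero : ∀ j, ∫ ω, f j ω ∂P = 0 := by
    intro j
    have : ∫ ω, f j ω ∂P = (inner ℝ u₀ (∫ ω, X j ω ∂P) : ℝ) := integral_inner (hXint j) u₀
    rw [this, hzero j, inner_zero_right]
  have hSzero : ∀ F, ∫ ω, S F ω ∂P = 0 := by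
    intro F
    have : ∫ ω, S F ω ∂P = ∑ j ∈ F, ∫ ω, f j ω ∂P :=
      integral_finset_sum F fun j _ => hfint j
    rw [this]
    exact Finset.sum_eq_zero fun j _ => hfzero j
  have hprod : ∀ F G, Integrable (fun ω => S F ω * S G ω) P := by
    intro F G
    refine hbint _ ((F.card * L) * (G.card * L)) ((hSm F).mul (hSm G)) fun ω => ?_
    rw [abs_mul]
    exact mul_le_mul (hSb F ω) (hSb G ω) (abs_nonneg _) (by positivity)
  have hcovR : ∀ F G : Finset ℕ,
      covR P (fun ω => ∑ j ∈ F, (inner ℝ u₀ (X j ω) : ℝ))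
        (fun ω => ∑ j ∈ G, (inner ℝ u₀ (X j ω) : ℝ)) = ∫ ω, S F ω * S G ω ∂P := by
    intro F G
    have h1 : covR P (S F) (S G) = ∫ ω, S F ω * S G ω ∂P := by
      rw [covR, hSzero F, hSzero G]; ring
    exact h1
  have hVar : ∀ F, variance (S F) P = ∫ ω, (S F ω) ^ 2 ∂P := by
    intro F
    rw [variance_eq_sub (hS2 F), hSzero F]
    norm_num
  have hVsq : ∀ F, (l2norm P (fun ω => ∑ j ∈ F, (inner ℝ u₀ (X j ω) : ℝ))) ^ 2
      = ∫ ω, (S F ω) ^ 2 ∂P := fun F => l2norm_sq' P (hS2 F)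
  set V : Fin k → ℝ := fun i => ∫ ω, (S (M i) ω) ^ 2 ∂P with hVdef
  have hV1 : ∀ i, 1 ≤ V i := by
    intro i
    have h1 := hl2 i
    have h2 := hVsq (M i)
    nlinarith
  set c : Fin k → Fin k → ℝ := fun i j => ∫ ω, S (M i) ω * S (M j) ω ∂P with hcdef
  have hcsymm : ∀ i j, c i j = c j i := by
    intro i j
    simp only [hcdef]
    exact integral_congr_ae (ae_of_all _ fun ω => mul_comm _ _)
  have hcdiag : ∀ i, c i i = V i := by
    intro i
    simp only [hcdef, hVdef]
    exact integral_congr_ae (ae_of_all _ fun ω => (sq (S (M i) ω)).symm)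
  have ha0 : ∀ m, 0 ≤ a m := fun m =>
    Real.rpow_nonneg (alphaMix_nonneg' P X _) _
  -- case r = 0 : the hypotheses are contradictory
  rcases Nat.eq_zero_or_pos r with hr0 | hr1
  · exfalso
    subst hr0
    have hc0 : a 0 = 0 := by
      have h1 : Tendsto a atTop (nhds 0) := hsum.tendsto_atTop_zero
      have h2 : Tendsto a atTop (nhds (a 0)) := by
        have : a = fun _ => a 0 := by
          funext m; simp only [ha, Nat.zero_mul]
        rw [this]
        exact tendsto_const_nhds
      exact tendsto_nhds_unique h2 h1
    have hα0 : (alphaMix P X 0) ^ (1 - 2 / p) = 0 := by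
      have : a 0 = (alphaMix P X 0) ^ (1 - 2 / p) := by simp [ha]
      rw [← this, hc0]
    have hpair : ∀ j l : ℕ, j ≤ l → ∫ ω, f j ω * f l ω ∂P = 0 := by
      intro j l hjl
      have hsep' : ∀ x ∈ ({j} : Finset ℕ), ∀ y ∈ ({l} : Finset ℕ), x + 0 ≤ y := by
        intro x hx y hy
        simp only [Finset.mem_singleton] at hx hy
        omega
      have h1 := hCp 0 {j} {l} (Finset.singleton_nonempty j) (Finset.singleton_nonempty l) hsep'
      rw [hcovR, hα0, mul_zero] at h1
      have h2 : ∫ ω, S {j} ω * S {l} ω ∂P = ∫ ω, f j ω * f l ω ∂P := by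
        apply integral_congr_ae (ae_of_all _ fun ω => ?_)
        simp [hSdef]
      rw [h2] at h1
      exact abs_eq_zero.mp (le_antisymm h1 (abs_nonneg _))
    have hpair' : ∀ j l : ℕ, ∫ ω, f j ω * f l ω ∂P = 0 := by
      intro j l
      rcases le_total j l with h | h
      · exact hpair j l h
      · rw [integral_congr_ae (ae_of_all _ fun ω => mul_comm (f j ω) (f l ω))]
        exact hpair l j h
    have i0 : Fin k := ⟨0, hk⟩
    have hV0 : V i0 = 0 := by
      have hfprod : ∀ j l : ℕ, Integrable (fun ω => f j ω * f l ω) P := by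
        intro j l
        refine hbint _ (L * L) ((hfm j).mul (hfm l)) fun ω => ?_
        rw [abs_mul]
        exact mul_le_mul (hfb j ω) (hfb l ω) (abs_nonneg _) hL0
      have h1 : ∀ ω, (S (M i0) ω) ^ 2 = ∑ j ∈ M i0, ∑ l ∈ M i0, f j ω * f l ω := by
        intro ω
        rw [sq]
        exact Finset.sum_mul_sum _ _ _ _
      have h2 : V i0 = ∑ j ∈ M i0, ∑ l ∈ M i0, ∫ ω, f j ω * f l ω ∂P := by
        rw [hVdef]
        simp only
        rw [integral_congr_ae (ae_of_all _ fun ω => h1 ω)]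
        rw [integral_finset_sum _ fun j _ => integrable_finset_sum _ fun l _ => hfprod j l]
        exact Finset.sum_congr rfl fun j _ =>
          integral_finset_sum _ fun l _ => hfprod j l
      rw [h2]
      exact Finset.sum_eq_zero fun j _ => Finset.sum_eq_zero fun l _ => hpair' j l
    have := hV1 i0
    linarith
  -- main case : r ≥ 1
  have hdisj : ∀ i j : Fin k, i ≠ j → Disjoint (M i) (M j) := by
    intro i j hij
    rw [Finset.disjoint_left]
    intro x hxi hxj
    rcases lt_or_gt_of_ne hij with h | h
    · have := hsep i j h x hxi x hxj; omega
    · have := hsep j i h x hxj x hxi; omega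
  have hT : ∀ ω, S (Finset.univ.biUnion M) ω = ∑ i : Fin k, S (M i) ω := by
    intro ω
    exact Finset.sum_biUnion fun i _ j _ hij => hdisj i j hij
  -- chained separation between blocks
  have gap : ∀ n : ℕ, ∀ i j : Fin k, (j : ℕ) = (i : ℕ) + n + 1 →
      ∀ x ∈ M i, ∀ y ∈ M j, x + r * (n + 1) ≤ y := by
    intro n
    induction n with
    | zero =>
      intro i j hij x hx y hy
      have hlt : i < j := by rw [Fin.lt_def]; omega
      have h1 := hsep i j hlt x hx y hy
      have h2 : r * (0 + 1) = r := by ring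
      omega
    | succ n ih =>
      intro i j hij x hx y hy
      have hjk : (j : ℕ) < k := j.isLt
      have hj' : (i : ℕ) + n + 1 < k := by omega
      set j' : Fin k := ⟨(i : ℕ) + n + 1, hj'⟩ with hj'def
      obtain ⟨z, hz⟩ := hMne j'
      have h1 : x + r * (n + 1) ≤ z := ih i j' rfl x hx z hz
      have hlt : j' < j := by rw [Fin.lt_def]; simp [hj'def]; omega
      have h2 : z + r ≤ y := hsep j' j hlt z hz y hy
      have h3 : r * (n + 1 + 1) = r * (n + 1) + r := by ring
      omega
  -- variance of the union as a double sum of covariances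
  have hexp : variance (S (Finset.univ.biUnion M)) P = ∑ i : Fin k, ∑ j : Fin k, c i j := by
    rw [hVar]
    have h1 : ∀ ω, (S (Finset.univ.biUnion M) ω) ^ 2
        = ∑ i : Fin k, ∑ j : Fin k, S (M i) ω * S (M j) ω := by
      intro ω
      rw [hT ω, sq]
      exact Finset.sum_mul_sum _ _ _ _
    rw [integral_congr_ae (ae_of_all _ h1)]
    rw [integral_finset_sum _ fun i _ => integrable_finset_sum _ fun j _ => hprod (M i) (M j)]
    exact Finset.sum_congr rfl fun i _ => integral_finset_sum _ fun j _ => hprod (M i) (M j)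
  set A : ℝ := ∑' m, a m with hA
  have hA0 : 0 ≤ A := tsum_nonneg ha0
  -- sums of mixing coefficients along a row/column are at most A
  have hrow : ∀ (i : Fin k) (s : Finset (Fin k)), (∀ j ∈ s, (i : ℕ) < (j : ℕ)) →
      ∑ j ∈ s, a ((j : ℕ) - (i : ℕ) - 1) ≤ A := by
    intro i s hs
    have h1 : ∑ m ∈ s.image (fun j : Fin k => (j : ℕ) - (i : ℕ) - 1), a m
        = ∑ j ∈ s, a ((j : ℕ) - (i : ℕ) - 1) := by
      refine Finset.sum_image ?_
      intro x hx y hy hxy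
      have hx' := hs x hx
      have hy' := hs y hy
      exact Fin.ext (by simp only at hxy; omega)
    rw [← h1]
    exact Summable.sum_le_tsum _ (fun m _ => ha0 m) hsum
  have hcol : ∀ (i : Fin k) (s : Finset (Fin k)), (∀ j ∈ s, (j : ℕ) < (i : ℕ)) →
      ∑ j ∈ s, a ((i : ℕ) - (j : ℕ) - 1) ≤ A := by
    intro i s hs
    have h1 : ∑ m ∈ s.image (fun j : Fin k => (i : ℕ) - (j : ℕ) - 1), a m
        = ∑ j ∈ s, a ((i : ℕ) - (j : ℕ) - 1) := by
      refine Finset.sum_image ?_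
      intro x hx y hy hxy
      have hx' := hs x hx
      have hy' := hs y hy
      exact Fin.ext (by simp only at hxy; omega)
    rw [← h1]
    exact Summable.sum_le_tsum _ (fun m _ => ha0 m) hsum
  -- the key covariance bound for separated blocks
  have hlt : ∀ i j : Fin k, i < j →
      |c i j| ≤ 2 * Cp * (V i + V j) * a ((j : ℕ) - (i : ℕ) - 1) := by
    intro i j hij
    have hij' : (i : ℕ) < (j : ℕ) := Fin.lt_def.mp hij
    have hjn : (j : ℕ) = (i : ℕ) + ((j : ℕ) - (i : ℕ) - 1) + 1 := by omega
    have h1 := hCp (r * (((j : ℕ) - (i : ℕ) - 1) + 1)) (M i) (M j) (hMne i) (hMne j)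
      (gap ((j : ℕ) - (i : ℕ) - 1) i j hjn)
    rw [hcovR] at h1
    have hcc : c i j = ∫ ω, S (M i) ω * S (M j) ω ∂P := rfl
    rw [← hcc] at h1
    have han : (alphaMix P X (r * (((j : ℕ) - (i : ℕ) - 1) + 1))) ^ (1 - 2 / p)
        = a ((j : ℕ) - (i : ℕ) - 1) := by rw [ha]
    rw [han] at h1
    set x := l2norm P (fun ω => ∑ j' ∈ M i, (inner ℝ u₀ (X j' ω) : ℝ)) with hxdef
    set y := l2norm P (fun ω => ∑ j' ∈ M j, (inner ℝ u₀ (X j' ω) : ℝ)) with hydef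
    have hx1 : 1 ≤ x := hl2 i
    have hy1 : 1 ≤ y := hl2 j
    have hVx : x ^ 2 = V i := hVsq (M i)
    have hVy : y ^ 2 = V j := hVsq (M j)
    have han0 : 0 ≤ a ((j : ℕ) - (i : ℕ) - 1) := ha0 _
    have hq : (1 + x) * (1 + y) ≤ 2 * (x ^ 2 + y ^ 2) := by
      nlinarith [sq_nonneg (x - y), sq_nonneg (x - 1), sq_nonneg (y - 1),
        mul_nonneg (sub_nonneg.2 hx1) (sub_nonneg.2 hy1)]
    have h2 : Cp * ((1 + x) * (1 + y)) * a ((j : ℕ) - (i : ℕ) - 1)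
        ≤ Cp * (2 * (x ^ 2 + y ^ 2)) * a ((j : ℕ) - (i : ℕ) - 1) := by
      have := mul_le_mul_of_nonneg_left hq hCp_pos.le
      exact mul_le_mul_of_nonneg_right this han0
    rw [← hVx, ← hVy]
    nlinarith [h1, h2]
  -- symmetrised bound
  set e : Fin k → Fin k → ℝ := fun i j =>
    if (i : ℕ) < (j : ℕ) then a ((j : ℕ) - (i : ℕ) - 1) else a ((i : ℕ) - (j : ℕ) - 1)
    with hedef
  have he0 : ∀ i j, 0 ≤ e i j := by
    intro i j
    simp only [hedef]
    split <;> exact ha0 _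
  have hesymm : ∀ i j : Fin k, e i j = e j i := by
    intro i j
    simp only [hedef]
    rcases lt_trichotomy ((i : ℕ)) ((j : ℕ)) with h | h | h
    · rw [if_pos h, if_neg (by omega)]
    · simp [h]
    · rw [if_neg (by omega), if_pos h]
  have hce : ∀ i j : Fin k, i ≠ j → |c i j| ≤ 2 * Cp * (V i + V j) * e i j := by
    intro i j hij
    rcases lt_or_gt_of_ne hij with h | h
    · have h1 := hlt i j h
      have h2 : e i j = a ((j : ℕ) - (i : ℕ) - 1) := by
        simp only [hedef]
        rw [if_pos (Fin.lt_def.mp h)]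
      rw [h2]
      exact h1
    · have h1 := hlt j i h
      have h2 : e i j = a ((i : ℕ) - (j : ℕ) - 1) := by
        simp only [hedef]
        rw [if_neg (by have := Fin.lt_def.mp h; omega)]
      rw [h2, hcsymm i j]
      calc |c j i| ≤ 2 * Cp * (V j + V i) * a ((i : ℕ) - (j : ℕ) - 1) := h1
        _ = 2 * Cp * (V i + V j) * a ((i : ℕ) - (j : ℕ) - 1) := by ring
  have hE : ∀ i : Fin k, ∑ j ∈ Finset.univ.erase i, e i j ≤ 2 * A := by
    intro i
    rw [← Finset.sum_filter_add_sum_filter_not (Finset.univ.erase i)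
      (fun j : Fin k => (i : ℕ) < (j : ℕ)) (e i)]
    have h1 : ∑ j ∈ (Finset.univ.erase i).filter (fun j : Fin k => (i : ℕ) < (j : ℕ)), e i j
        = ∑ j ∈ (Finset.univ.erase i).filter (fun j : Fin k => (i : ℕ) < (j : ℕ)),
          a ((j : ℕ) - (i : ℕ) - 1) := by
      refine Finset.sum_congr rfl fun j hj => ?_
      rw [Finset.mem_filter] at hj
      simp only [hedef]
      rw [if_pos hj.2]
    have h2 : ∑ j ∈ (Finset.univ.erase i).filter (fun j : Fin k => ¬ (i : ℕ) < (j : ℕ)), e i j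
        = ∑ j ∈ (Finset.univ.erase i).filter (fun j : Fin k => ¬ (i : ℕ) < (j : ℕ)),
          a ((i : ℕ) - (j : ℕ) - 1) := by
      refine Finset.sum_congr rfl fun j hj => ?_
      rw [Finset.mem_filter] at hj
      simp only [hedef]
      rw [if_neg hj.2]
    rw [h1, h2]
    have h3 := hrow i ((Finset.univ.erase i).filter (fun j : Fin k => (i : ℕ) < (j : ℕ)))
      (fun j hj => (Finset.mem_filter.mp hj).2)
    have h4 := hcol i ((Finset.univ.erase i).filter (fun j : Fin k => ¬ (i : ℕ) < (j : ℕ)))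
      (fun j hj => by
        have hj' := Finset.mem_filter.mp hj
        have hne := (Finset.mem_erase.mp hj'.1).1
        have : (j : ℕ) ≠ (i : ℕ) := fun hh => hne (Fin.ext hh)
        omega)
    linarith
  -- put everything together
  set SV : ℝ := ∑ i : Fin k, V i with hSV
  have hSV0 : 0 ≤ SV := Finset.sum_nonneg fun i _ => le_trans zero_le_one (hV1 i)
  set R : ℝ := ∑ i : Fin k, ∑ j ∈ Finset.univ.erase i, c i j with hR
  have hdecomp : ∑ i : Fin k, ∑ j : Fin k, c i j = SV + R := by
    have h1 : ∀ i : Fin k, ∑ j : Fin k, c i j = c i i + ∑ j ∈ Finset.univ.erase i, c i j :=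
      fun i => (Finset.add_sum_erase Finset.univ (c i) (Finset.mem_univ i)).symm
    calc ∑ i : Fin k, ∑ j : Fin k, c i j
        = ∑ i : Fin k, (c i i + ∑ j ∈ Finset.univ.erase i, c i j) :=
          Finset.sum_congr rfl fun i _ => h1 i
      _ = ∑ i : Fin k, c i i + R := Finset.sum_add_distrib
      _ = SV + R := by
          rw [hSV]
          congr 1
          exact Finset.sum_congr rfl fun i _ => hcdiag i
  have hEsum : ∀ i : Fin k, ∑ j ∈ Finset.univ.erase i, e j i ≤ 2 * A := by
    intro i
    calc ∑ j ∈ Finset.univ.erase i, e j i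
        = ∑ j ∈ Finset.univ.erase i, e i j :=
          Finset.sum_congr rfl fun j _ => (hesymm i j).symm
      _ ≤ 2 * A := hE i
  have hRbound : |R| ≤ SV / 4 := by
    have habs : |R| ≤ ∑ i : Fin k, ∑ j ∈ Finset.univ.erase i, |c i j| := by
      calc |R| ≤ ∑ i : Fin k, |∑ j ∈ Finset.univ.erase i, c i j| :=
            Finset.abs_sum_le_sum_abs _ _
        _ ≤ ∑ i : Fin k, ∑ j ∈ Finset.univ.erase i, |c i j| :=
            Finset.sum_le_sum fun i _ => Finset.abs_sum_le_sum_abs _ _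
    have hstep : ∑ i : Fin k, ∑ j ∈ Finset.univ.erase i, |c i j|
        ≤ 2 * Cp * (∑ i : Fin k, ∑ j ∈ Finset.univ.erase i, (V i + V j) * e i j) := by
      rw [Finset.mul_sum]
      refine Finset.sum_le_sum fun i _ => ?_
      rw [Finset.mul_sum]
      refine Finset.sum_le_sum fun j hj => ?_
      have hne : i ≠ j := fun hh => (Finset.mem_erase.mp hj).1 hh.symm
      calc |c i j| ≤ 2 * Cp * (V i + V j) * e i j := hce i j hne
        _ = 2 * Cp * ((V i + V j) * e i j) := by ring
    have hsplit : ∑ i : Fin k, ∑ j ∈ Finset.univ.erase i, (V i + V j) * e i j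
        = (∑ i : Fin k, ∑ j ∈ Finset.univ.erase i, V i * e i j)
          + ∑ i : Fin k, ∑ j ∈ Finset.univ.erase i, V j * e i j := by
      rw [← Finset.sum_add_distrib]
      refine Finset.sum_congr rfl fun i _ => ?_
      rw [← Finset.sum_add_distrib]
      exact Finset.sum_congr rfl fun j _ => by ring
    have hswap : ∑ i : Fin k, ∑ j ∈ Finset.univ.erase i, V j * e i j
        = ∑ j : Fin k, ∑ i ∈ Finset.univ.erase j, V j * e i j := by
      refine Finset.sum_comm' ?_
      intro x y
      simp only [Finset.mem_univ, Finset.mem_erase, true_and, and_true]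
      exact ⟨fun h => h.symm, fun h => h.symm⟩
    have hT1 : ∑ i : Fin k, ∑ j ∈ Finset.univ.erase i, V i * e i j ≤ 2 * A * SV := by
      calc ∑ i : Fin k, ∑ j ∈ Finset.univ.erase i, V i * e i j
          = ∑ i : Fin k, V i * ∑ j ∈ Finset.univ.erase i, e i j :=
            Finset.sum_congr rfl fun i _ => (Finset.mul_sum _ _ _).symm
        _ ≤ ∑ i : Fin k, V i * (2 * A) :=
            Finset.sum_le_sum fun i _ =>
              mul_le_mul_of_nonneg_left (hE i) (le_trans zero_le_one (hV1 i))
        _ = 2 * A * SV := by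
            rw [hSV, Finset.mul_sum]
            exact Finset.sum_congr rfl fun i _ => by ring
    have hT2 : ∑ j : Fin k, ∑ i ∈ Finset.univ.erase j, V j * e i j ≤ 2 * A * SV := by
      calc ∑ j : Fin k, ∑ i ∈ Finset.univ.erase j, V j * e i j
          = ∑ j : Fin k, V j * ∑ i ∈ Finset.univ.erase j, e i j :=
            Finset.sum_congr rfl fun j _ => (Finset.mul_sum _ _ _).symm
        _ ≤ ∑ j : Fin k, V j * (2 * A) :=
            Finset.sum_le_sum fun j _ =>
              mul_le_mul_of_nonneg_left (hEsum j) (le_trans zero_le_one (hV1 j))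
        _ = 2 * A * SV := by
            rw [hSV, Finset.mul_sum]
            exact Finset.sum_congr rfl fun j _ => by ring
    have hAlt : A < 1 / (32 * Cp) := hr
    have h8 : 2 * Cp * ((2 * A * SV) + (2 * A * SV)) ≤ SV / 4 := by
      have hAle : A * SV ≤ (1 / (32 * Cp)) * SV := mul_le_mul_of_nonneg_right hAlt.le hSV0
      have : 2 * Cp * ((2 * A * SV) + (2 * A * SV)) = 8 * Cp * (A * SV) := by ring
      rw [this]
      calc 8 * Cp * (A * SV) ≤ 8 * Cp * ((1 / (32 * Cp)) * SV) := by
            exact mul_le_mul_of_nonneg_left hAle (by positivity)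
        _ = SV / 4 := by field_simp; ring
    calc |R| ≤ ∑ i : Fin k, ∑ j ∈ Finset.univ.erase i, |c i j| := habs
      _ ≤ 2 * Cp * (∑ i : Fin k, ∑ j ∈ Finset.univ.erase i, (V i + V j) * e i j) := hstep
      _ = 2 * Cp * ((∑ i : Fin k, ∑ j ∈ Finset.univ.erase i, V i * e i j)
            + ∑ j : Fin k, ∑ i ∈ Finset.univ.erase j, V j * e i j) := by rw [hsplit, hswap]
      _ ≤ 2 * Cp * ((2 * A * SV) + (2 * A * SV)) :=
          mul_le_mul_of_nonneg_left (add_le_add hT1 hT2) (by positivity)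
      _ ≤ SV / 4 := h8
  -- conclusion
  have hVarU : variance (S (Finset.univ.biUnion M)) P = SV + R := hexp.trans hdecomp
  have hVarS : ∑ i : Fin k, variance (S (M i)) P = SV := by
    rw [hSV]
    exact Finset.sum_congr rfl fun i _ => hVar (M i)
  obtain ⟨hR1, hR2⟩ := abs_le.mp hRbound
  constructor
  · show (1 / 2) * (∑ i : Fin k, variance (S (M i)) P) ≤ variance (S (Finset.univ.biUnion M)) P
    rw [hVarS, hVarU]
    linarith
  · show variance (S (Finset.univ.biUnion M)) P ≤ (3 / 2) * ∑ i : Fin k, variance (S (M i)) P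
    rw [hVarS, hVarU]
    linarith

end
end

section
/- Let {X_j} be a sequence of zero-mean ℝ^d-valued random vectors, uniformly bounded in the sup norm with L = sup_j ‖X_j‖_∞, with φ(n₀) < 1/2 for some n₀ ∈ ℕ and Σ_{m≥1}(α(m))^{1−2/p} < ∞ for some p > 2. Fix a unit vector u₀ and put S(M) = Σ_{j∈M} X_j · u₀ for finite M ⊂ ℕ. Let M₁ < M₂ < … < M_k be finite integer intervals that are r-separated, let I_j = M_j ∪ D_j where D_j = {max M_j + 1, …, max M_j + r} are the gap blocks of length r, and set Y = S(I₁ ∪ … ∪ I_k) − S(M₁ ∪ … ∪ M_k) = Σ_{j=1}^k S(D_j). Then there is a constant Q₀ > 0, depending only on p, r, L, n₀ and the α-mixing coefficients (and not on k or the choice of blocks), such that Var(Y) ≤ Q₀ · k. -/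
/- Statement 7: the variance of the sum over the gap blocks D_j is at most Q₀·k. -/

open MeasureTheory ProbabilityTheory Filter Finset
open scoped NNReal ENNReal

noncomputable section

open scoped Classical

set_option linter.unusedSectionVars false

section CovLemma


variable {Ω : Type*} {m0 : MeasurableSpace Ω} {P : Measure Ω} [IsProbabilityMeasure P]

lemma my_integrable_of_bounded {f : Ω → ℝ} {c : ℝ} (hf : AEStronglyMeasurable f P)
    (hb : ∀ ω, |f ω| ≤ c) : Integrable f P :=
  (integrable_const c).mono' hf (Eventually.of_forall fun ω => by
    simpa [Real.norm_eq_abs] using hb ω)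

lemma my_integral_ind {A : Set Ω} (hA : MeasurableSet A) :
    ∫ ω, A.indicator (fun _ => (1:ℝ)) ω ∂P = (P A).toReal :=
  integral_indicator_one hA

lemma my_integral_sign {A : Set Ω} (hA : MeasurableSet A) :
    ∫ ω, (if ω ∈ A then (1:ℝ) else -1) ∂P = 2 * (P A).toReal - 1 := by
  have h : (fun ω => (if ω ∈ A then (1:ℝ) else -1))
      = fun ω => 2 * A.indicator (fun _ => (1:ℝ)) ω - 1 := by
    funext ω; by_cases h : ω ∈ A <;> simp [h] <;> norm_num
  rw [h, integral_sub (((integrable_const (1:ℝ)).indicator hA).const_mul 2)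
    (integrable_const 1), integral_const_mul, my_integral_ind hA, integral_const]
  simp

lemma my_cov_reduce {m : MeasurableSpace Ω} (hm : m ≤ m0) {ξ η : Ω → ℝ} {a : ℝ}
    (ha : 0 ≤ a) (hξm : StronglyMeasurable[m] ξ) (hξb : ∀ ω, |ξ ω| ≤ a)
    (hη : Integrable η P) :
    ∃ A : Set Ω, MeasurableSet[m] A ∧
      |(∫ ω, ξ ω * η ω ∂P) - (∫ ω, ξ ω ∂P) * ∫ ω, η ω ∂P|
        ≤ a * |(∫ ω, (if ω ∈ A then (1:ℝ) else -1) * η ω ∂P)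
            - (∫ ω, (if ω ∈ A then (1:ℝ) else -1) ∂P) * ∫ ω, η ω ∂P| := by
  set c := ∫ ω, η ω ∂P with hc
  set h : Ω → ℝ := fun ω => η ω - c with hh_def
  have hh : Integrable h P := hη.sub (integrable_const c)
  have hξa : AEStronglyMeasurable (m := m0) ξ P := (hξm.mono hm).aestronglyMeasurable
  have hξint : Integrable ξ P := my_integrable_of_bounded hξa hξb
  have hξbd : ∀ᵐ ω ∂P, ‖ξ ω‖ ≤ a := Eventually.of_forall fun ω => by simpa [Real.norm_eq_abs] using hξb ω
  have hξη : Integrable (fun ω => ξ ω * η ω) P := hη.bdd_mul hξa hξbd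
  have hξh : Integrable (ξ * h) P := hh.bdd_mul hξa hξbd
  set ζ : Ω → ℝ := P[h|m] with hζ_def
  have hζm : StronglyMeasurable[m] ζ := stronglyMeasurable_condExp
  have hζint : Integrable ζ P := integrable_condExp
  set A : Set Ω := {ω | 0 ≤ ζ ω} with hA_def
  have hA : MeasurableSet[m] A := measurableSet_le measurable_const hζm.measurable
  set s : Ω → ℝ := fun ω => if ω ∈ A then (1:ℝ) else -1 with hs_def
  have hsm : StronglyMeasurable[m] s :=
    (Measurable.ite hA measurable_const measurable_const).stronglyMeasurable
  have hsb : ∀ ω, |s ω| ≤ 1 := fun ω => by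
    by_cases h' : ω ∈ A <;> simp [hs_def, h']
  have hsa : AEStronglyMeasurable (m := m0) s P := (hsm.mono hm).aestronglyMeasurable
  have hsbd : ∀ᵐ ω ∂P, ‖s ω‖ ≤ 1 := Eventually.of_forall fun ω => by simpa [Real.norm_eq_abs] using hsb ω
  have hsint : Integrable s P := my_integrable_of_bounded hsa hsb
  have hsh : Integrable (s * h) P := hh.bdd_mul hsa hsbd
  have hsη : Integrable (fun ω => s ω * η ω) P := hη.bdd_mul hsa hsbd
  refine ⟨A, hA, ?_⟩
  show |(∫ ω, ξ ω * η ω ∂P) - (∫ ω, ξ ω ∂P) * c|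
      ≤ a * |(∫ ω, s ω * η ω ∂P) - (∫ ω, s ω ∂P) * c|
  have eq1 : ∀ (f : Ω → ℝ), Integrable f P → Integrable (fun ω => f ω * η ω) P →
      ∫ ω, f ω * h ω ∂P = (∫ ω, f ω * η ω ∂P) - (∫ ω, f ω ∂P) * c := by
    intro f hf hfη
    have : (fun ω => f ω * h ω) = fun ω => f ω * η ω - c * f ω := by
      funext ω; simp only [hh_def]; ring
    rw [this, integral_sub hfη (hf.const_mul c), integral_const_mul]
    ring
  have eq2 : ∫ ω, ξ ω * h ω ∂P = ∫ ω, ξ ω * ζ ω ∂P := by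
    have pull : P[ξ * h|m] =ᵐ[P] ξ * ζ := condExp_mul_of_stronglyMeasurable_left hξm hξh hh
    calc ∫ ω, ξ ω * h ω ∂P = ∫ ω, (P[ξ * h|m]) ω ∂P := (integral_condExp hm).symm
      _ = ∫ ω, ξ ω * ζ ω ∂P := integral_congr_ae pull
  have hξζ : Integrable (fun ω => ξ ω * ζ ω) P := hζint.bdd_mul hξa hξbd
  have eq3 : |∫ ω, ξ ω * ζ ω ∂P| ≤ a * ∫ ω, |ζ ω| ∂P := by
    calc |∫ ω, ξ ω * ζ ω ∂P| ≤ ∫ ω, |ξ ω * ζ ω| ∂P := by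
          simpa only [Real.norm_eq_abs] using norm_integral_le_integral_norm (μ := P) (fun ω => ξ ω * ζ ω)
      _ ≤ ∫ ω, a * |ζ ω| ∂P := by
          refine integral_mono hξζ.abs (hζint.abs.const_mul a) fun ω => ?_
          rw [abs_mul]
          exact mul_le_mul_of_nonneg_right (hξb ω) (abs_nonneg _)
      _ = a * ∫ ω, |ζ ω| ∂P := integral_const_mul _ _
  have eq4 : ∫ ω, |ζ ω| ∂P = ∫ ω, s ω * ζ ω ∂P := by
    congr 1
    funext ω
    by_cases h' : ω ∈ A
    · have h0 : 0 ≤ ζ ω := h'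
      simp [hs_def, h', abs_of_nonneg h0]
    · have h0 : ζ ω < 0 := lt_of_not_ge h'
      simp [hs_def, h', abs_of_neg h0]
  have eq5 : ∫ ω, s ω * ζ ω ∂P = ∫ ω, s ω * h ω ∂P := by
    have pull : P[s * h|m] =ᵐ[P] s * ζ := condExp_mul_of_stronglyMeasurable_left hsm hsh hh
    calc ∫ ω, s ω * ζ ω ∂P = ∫ ω, (P[s * h|m]) ω ∂P := (integral_congr_ae pull).symm
      _ = ∫ ω, s ω * h ω ∂P := integral_condExp hm
  calc |(∫ ω, ξ ω * η ω ∂P) - (∫ ω, ξ ω ∂P) * c|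
      = |∫ ω, ξ ω * h ω ∂P| := by rw [eq1 ξ hξint hξη]
    _ = |∫ ω, ξ ω * ζ ω ∂P| := by rw [eq2]
    _ ≤ a * ∫ ω, |ζ ω| ∂P := eq3
    _ = a * ∫ ω, s ω * ζ ω ∂P := by rw [eq4]
    _ = a * ∫ ω, s ω * h ω ∂P := by rw [eq5]
    _ = a * ((∫ ω, s ω * η ω ∂P) - (∫ ω, s ω ∂P) * c) := by rw [eq1 s hsint hsη]
    _ ≤ a * |(∫ ω, s ω * η ω ∂P) - (∫ ω, s ω ∂P) * c| :=
        mul_le_mul_of_nonneg_left (le_abs_self _) ha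

lemma my_sign_mul_integral {A B : Set Ω} (hA : MeasurableSet A) (hB : MeasurableSet B) :
    (∫ ω, (if ω ∈ B then (1:ℝ) else -1) * (if ω ∈ A then (1:ℝ) else -1) ∂P)
      - (∫ ω, (if ω ∈ B then (1:ℝ) else -1) ∂P) * (∫ ω, (if ω ∈ A then (1:ℝ) else -1) ∂P)
    = 4 * ((P (A ∩ B)).toReal - (P A).toReal * (P B).toReal) := by
  have hAB : MeasurableSet (A ∩ B) := hA.inter hB
  have key : (fun ω => (if ω ∈ B then (1:ℝ) else -1) * (if ω ∈ A then (1:ℝ) else -1))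
      = fun ω => (4 * (A ∩ B).indicator (fun _ => (1:ℝ)) ω
          - 2 * A.indicator (fun _ => (1:ℝ)) ω - 2 * B.indicator (fun _ => (1:ℝ)) ω) + 1 := by
    funext ω
    by_cases hA' : ω ∈ A <;> by_cases hB' : ω ∈ B <;>
      simp [hA', hB', Set.indicator, Set.mem_inter_iff] <;> norm_num
  have iAB : Integrable ((A ∩ B).indicator (fun _ => (1:ℝ))) P :=
    (integrable_const (1:ℝ)).indicator hAB
  have iA : Integrable (A.indicator (fun _ => (1:ℝ))) P := (integrable_const (1:ℝ)).indicator hA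
  have iB : Integrable (B.indicator (fun _ => (1:ℝ))) P := (integrable_const (1:ℝ)).indicator hB
  have i1 : Integrable (fun ω => 4 * (A ∩ B).indicator (fun _ => (1:ℝ)) ω
      - 2 * A.indicator (fun _ => (1:ℝ)) ω) P := (iAB.const_mul 4).sub (iA.const_mul 2)
  have i2 : Integrable (fun ω => (4 * (A ∩ B).indicator (fun _ => (1:ℝ)) ω
      - 2 * A.indicator (fun _ => (1:ℝ)) ω) - 2 * B.indicator (fun _ => (1:ℝ)) ω) P :=
    i1.sub (iB.const_mul 2)
  rw [key, integral_add i2 (integrable_const 1),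
    integral_sub i1 (iB.const_mul 2),
    integral_sub (iAB.const_mul 4) (iA.const_mul 2),
    integral_const_mul, integral_const_mul, integral_const_mul,
    my_integral_ind hAB, my_integral_ind hA, my_integral_ind hB,
    integral_const, my_integral_sign hA, my_integral_sign hB]
  simp only [measure_univ, ENNReal.toReal_one, smul_eq_mul, one_mul, mul_one, probReal_univ]
  ring

lemma my_cov_le {m₁ m₂ : MeasurableSpace Ω} (hm₁ : m₁ ≤ m0) (hm₂ : m₂ ≤ m0)
    {ξ η : Ω → ℝ} {a b α : ℝ} (ha : 0 ≤ a) (hb : 0 ≤ b)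
    (hξm : StronglyMeasurable[m₁] ξ) (hηm : StronglyMeasurable[m₂] η)
    (hξb : ∀ ω, |ξ ω| ≤ a) (hηb : ∀ ω, |η ω| ≤ b)
    (hα : ∀ A B : Set Ω, MeasurableSet[m₁] A → MeasurableSet[m₂] B →
      |(P (A ∩ B)).toReal - (P A).toReal * (P B).toReal| ≤ α) :
    |(∫ ω, ξ ω * η ω ∂P) - (∫ ω, ξ ω ∂P) * ∫ ω, η ω ∂P| ≤ 4 * (a * b) * α := by
  have hηint : Integrable η P :=
    my_integrable_of_bounded ((hηm.mono hm₂).aestronglyMeasurable) hηb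
  obtain ⟨A, hA, h1⟩ := my_cov_reduce hm₁ ha hξm hξb hηint
  set sA : Ω → ℝ := fun ω => if ω ∈ A then (1:ℝ) else -1 with hsA_def
  have hsAb : ∀ ω, |sA ω| ≤ 1 := fun ω => by by_cases h' : ω ∈ A <;> simp [hsA_def, h']
  have hsAint : Integrable sA P :=
    my_integrable_of_bounded
      ((Measurable.ite (hm₁ _ hA) measurable_const measurable_const).aestronglyMeasurable) hsAb
  obtain ⟨B, hB, h2⟩ := my_cov_reduce hm₂ hb hηm hηb hsAint
  set sB : Ω → ℝ := fun ω => if ω ∈ B then (1:ℝ) else -1 with hsB_def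
  have hswap : (∫ ω, sA ω * η ω ∂P) - (∫ ω, sA ω ∂P) * ∫ ω, η ω ∂P
      = (∫ ω, η ω * sA ω ∂P) - (∫ ω, η ω ∂P) * ∫ ω, sA ω ∂P := by
    rw [mul_comm (∫ ω, sA ω ∂P)]
    congr 1
    exact integral_congr_ae (Eventually.of_forall fun ω => mul_comm _ _)
  have h3 : |(∫ ω, sB ω * sA ω ∂P) - (∫ ω, sB ω ∂P) * ∫ ω, sA ω ∂P| ≤ 4 * α := by
    have := my_sign_mul_integral (P := P) (hm₁ _ hA) (hm₂ _ hB)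
    rw [hsA_def, hsB_def]
    rw [this, abs_mul, abs_of_nonneg (by norm_num : (0:ℝ) ≤ 4)]
    exact mul_le_mul_of_nonneg_left (hα A B hA hB) (by norm_num)
  calc |(∫ ω, ξ ω * η ω ∂P) - (∫ ω, ξ ω ∂P) * ∫ ω, η ω ∂P|
      ≤ a * |(∫ ω, sA ω * η ω ∂P) - (∫ ω, sA ω ∂P) * ∫ ω, η ω ∂P| := h1
    _ = a * |(∫ ω, η ω * sA ω ∂P) - (∫ ω, η ω ∂P) * ∫ ω, sA ω ∂P| := by rw [hswap]
    _ ≤ a * (b * |(∫ ω, sB ω * sA ω ∂P) - (∫ ω, sB ω ∂P) * ∫ ω, sA ω ∂P|) :=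
        mul_le_mul_of_nonneg_left h2 ha
    _ ≤ a * (b * (4 * α)) :=
        mul_le_mul_of_nonneg_left (mul_le_mul_of_nonneg_left h3 hb) ha
    _ = 4 * (a * b) * α := by ring

end CovLemma

section AlphaFacts


variable {Ω E : Type*} [MeasurableSpace Ω] [MeasurableSpace E]
  (P : Measure Ω) [IsProbabilityMeasure P] (X : ℕ → Ω → E)

lemma my_pastSigma_le (hmeas : ∀ n, Measurable (X n)) (n : ℕ) :
    pastSigma X n ≤ ‹MeasurableSpace Ω› :=
  iSup₂_le fun i _ => measurable_iff_comap_le.mp (hmeas i)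

lemma my_futureSigma_le (hmeas : ∀ n, Measurable (X n)) (n : ℕ) :
    futureSigma X n ≤ ‹MeasurableSpace Ω› :=
  iSup₂_le fun i _ => measurable_iff_comap_le.mp (hmeas i)

lemma my_measurable_pastSigma {i n : ℕ} (hi : i ≤ n) :
    Measurable[pastSigma X n] (X i) :=
  measurable_iff_comap_le.mpr
    (le_biSup (fun i => MeasurableSpace.comap (X i) inferInstance)
      (show i ∈ Set.Iic n from hi))

lemma my_measurable_futureSigma {i n : ℕ} (hi : n ≤ i) :
    Measurable[futureSigma X n] (X i) :=
  measurable_iff_comap_le.mpr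
    (le_biSup (fun i => MeasurableSpace.comap (X i) inferInstance)
      (show i ∈ Set.Ici n from hi))

lemma my_futureSigma_antitone {n₁ n₂ : ℕ} (h : n₁ ≤ n₂) :
    futureSigma X n₂ ≤ futureSigma X n₁ :=
  iSup₂_le fun i hi =>
    le_biSup (fun i => MeasurableSpace.comap (X i) inferInstance)
      (show i ∈ Set.Ici n₁ from le_trans h hi)

lemma my_alphaSet_le_one (k : ℕ) : ∀ x ∈ { r | ∃ j, ∃ A B : Set Ω,
    MeasurableSet[pastSigma X j] A ∧ MeasurableSet[futureSigma X (j + k)] B ∧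
    r = |(P (A ∩ B)).toReal - (P A).toReal * (P B).toReal| }, x ≤ 1 := by
  rintro x ⟨j, A, B, hA, hB, rfl⟩
  have h1 : (P (A ∩ B)).toReal ≤ 1 := by
    have := prob_le_one (μ := P) (s := A ∩ B)
    simpa using ENNReal.toReal_mono ENNReal.one_ne_top this
  have h2 : (P A).toReal ≤ 1 := by
    have := prob_le_one (μ := P) (s := A)
    simpa using ENNReal.toReal_mono ENNReal.one_ne_top this
  have h3 : (P B).toReal ≤ 1 := by
    have := prob_le_one (μ := P) (s := B)
    simpa using ENNReal.toReal_mono ENNReal.one_ne_top this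
  have h4 : (0:ℝ) ≤ (P (A ∩ B)).toReal := ENNReal.toReal_nonneg
  have h5 : (0:ℝ) ≤ (P A).toReal := ENNReal.toReal_nonneg
  have h6 : (0:ℝ) ≤ (P B).toReal := ENNReal.toReal_nonneg
  rw [abs_le]
  constructor <;> nlinarith

lemma my_alphaSet_bdd (k : ℕ) : BddAbove { r | ∃ j, ∃ A B : Set Ω,
    MeasurableSet[pastSigma X j] A ∧ MeasurableSet[futureSigma X (j + k)] B ∧
    r = |(P (A ∩ B)).toReal - (P A).toReal * (P B).toReal| } :=
  ⟨1, my_alphaSet_le_one P X k⟩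

lemma my_le_alphaMix (k j : ℕ) {A B : Set Ω} (hA : MeasurableSet[pastSigma X j] A)
    (hB : MeasurableSet[futureSigma X (j + k)] B) :
    |(P (A ∩ B)).toReal - (P A).toReal * (P B).toReal| ≤ alphaMix P X k :=
  le_csSup (my_alphaSet_bdd P X k) ⟨j, A, B, hA, hB, rfl⟩

lemma my_alphaMix_nonneg (k : ℕ) : 0 ≤ alphaMix P X k := by
  have h := my_le_alphaMix P X k 0 (A := ∅) (B := ∅)
    (@MeasurableSet.empty _ (pastSigma X 0)) (@MeasurableSet.empty _ (futureSigma X (0 + k)))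
  simpa using h

lemma my_alphaMix_le_one (k : ℕ) : alphaMix P X k ≤ 1 := by
  refine csSup_le ⟨0, 0, ∅, ∅, @MeasurableSet.empty _ (pastSigma X 0),
    @MeasurableSet.empty _ (futureSigma X (0 + k)), by simp⟩ (my_alphaSet_le_one P X k)

end AlphaFacts

theorem variance_gap_blocks
    {Ω : Type*} [MeasurableSpace Ω] (P : Measure Ω) [IsProbabilityMeasure P]
    {d : ℕ} (X : ℕ → Ω → EuclideanSpace ℝ (Fin d))
    (hmeas : ∀ n, Measurable (X n))
    (hzero : ∀ n, ∫ ω, X n ω ∂P = 0)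
    (L : ℝ) (hL : ∀ n ω, ‖X n ω‖ ≤ L)
    (n₀ : ℕ) (hφ : phiMix P X n₀ < 1 / 2)
    (p : ℝ) (hp : 2 < p)
    (hsumα : Summable fun m : ℕ => (alphaMix P X (m + 1)) ^ (1 - 2 / p))
    (u₀ : EuclideanSpace ℝ (Fin d)) (hu₀ : ‖u₀‖ = 1)
    (r : ℕ) :
    ∃ Q₀ : ℝ, 0 < Q₀ ∧
      ∀ (k : ℕ) (M : Fin k → Finset ℕ) (hMne : ∀ j, (M j).Nonempty),
        -- each M_j is a (finite) integer interval
        (∀ j, ∃ a b : ℕ, a ≤ b ∧ M j = Finset.Icc a b) →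
        -- the blocks are r-separated
        (∀ i j : Fin k, i < j → ∀ x ∈ M i, ∀ y ∈ M j, x + r ≤ y) →
        -- Var(Y) ≤ Q₀ k, where Y = ∑_j S(D_j) and D_j is the length-r gap block
        variance (fun ω => ∑ j : Fin k,
            ∑ i ∈ Finset.Icc ((M j).max' (hMne j) + 1) ((M j).max' (hMne j) + r),
              (inner ℝ u₀ (X i ω) : ℝ)) P ≤ Q₀ * k := by
  classical
  have hΩ : Nonempty Ω := P.nonempty_of_neZero
  have hL0 : (0:ℝ) ≤ L := le_trans (norm_nonneg _) (hL 0 hΩ.some)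
  set c : ℝ := (r : ℝ) * L with hc_def
  have hc0 : (0:ℝ) ≤ c := by positivity
  have hsum : Summable (fun m : ℕ => alphaMix P X (m + 1)) := by
    refine Summable.of_nonneg_of_le (fun m => my_alphaMix_nonneg P X (m+1)) (fun m => ?_) hsumα
    rcases eq_or_lt_of_le (my_alphaMix_nonneg P X (m+1)) with h0 | h0
    · rw [← h0]
      exact Real.rpow_nonneg le_rfl _
    · calc alphaMix P X (m+1) = alphaMix P X (m+1) ^ (1:ℝ) := (Real.rpow_one _).symm
        _ ≤ alphaMix P X (m+1) ^ (1 - 2/p) := by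
            apply Real.rpow_le_rpow_of_exponent_ge h0 (my_alphaMix_le_one P X (m+1))
            have hp0 : (0:ℝ) < p := by linarith
            have h2p : 0 ≤ 2/p := by positivity
            linarith
  set Aα : ℝ := ∑' m : ℕ, alphaMix P X (m + 1) with hAα_def
  have hAα0 : 0 ≤ Aα := tsum_nonneg fun m => my_alphaMix_nonneg P X (m+1)
  refine ⟨c * c * (1 + 8 * Aα) + 1, by nlinarith [mul_self_nonneg c], ?_⟩
  intro k M hMne hIcc hsep
  rcases Nat.eq_zero_or_pos r with hr0 | hr
  · have hY0 : (fun ω => ∑ j : Fin k,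
        ∑ i ∈ Finset.Icc ((M j).max' (hMne j) + 1) ((M j).max' (hMne j) + r),
          (inner ℝ u₀ (X i ω) : ℝ)) = fun _ : Ω => (0:ℝ) := by
      funext ω
      refine Finset.sum_eq_zero fun j _ => ?_
      have he : Finset.Icc ((M j).max' (hMne j) + 1) ((M j).max' (hMne j) + r) = ∅ :=
        Finset.Icc_eq_empty (by omega)
      rw [he, Finset.sum_empty]
    rw [hY0]
    have hv : variance (fun _ : Ω => (0:ℝ)) P ≤ P[(fun _ : Ω => (0:ℝ)) ^ 2] :=
      variance_le_expectation_sq aestronglyMeasurable_const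
    have h2 : P[(fun _ : Ω => (0:ℝ)) ^ 2] = (0:ℝ) := by
      simp [Pi.pow_apply]
    rw [h2] at hv
    have hk0 : (0:ℝ) ≤ (k:ℝ) := Nat.cast_nonneg k
    have hq : (0:ℝ) ≤ (c * c * (1 + 8 * Aα) + 1) * (k:ℝ) :=
      mul_nonneg (by nlinarith [mul_self_nonneg c]) hk0
    linarith
  · set t : Fin k → ℕ := fun j => (M j).max' (hMne j) with ht_def
    set ξ : Fin k → Ω → ℝ := fun j ω => ∑ i ∈ Finset.Icc (t j + 1) (t j + r),
      (inner ℝ u₀ (X i ω) : ℝ) with hξ_def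
    set Y : Ω → ℝ := fun ω => ∑ j : Fin k, ξ j ω with hY_def
    have hmeasinner : ∀ i : ℕ, Measurable (fun ω => (inner ℝ u₀ (X i ω) : ℝ)) :=
      fun i => measurable_const.inner (hmeas i)
    have hmeasξ : ∀ j, Measurable (ξ j) := fun j =>
      Finset.measurable_sum _ fun i _ => hmeasinner i
    have hinnerb : ∀ (i : ℕ) ω, |(inner ℝ u₀ (X i ω) : ℝ)| ≤ L := fun i ω => by
      calc |(inner ℝ u₀ (X i ω) : ℝ)| ≤ ‖u₀‖ * ‖X i ω‖ := abs_real_inner_le_norm _ _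
        _ = ‖X i ω‖ := by rw [hu₀, one_mul]
        _ ≤ L := hL i ω
    have hbξ : ∀ j ω, |ξ j ω| ≤ c := by
      intro j ω
      have hcard : (Finset.Icc (t j + 1) (t j + r)).card = r := by
        rw [Nat.card_Icc]; omega
      calc |ξ j ω| ≤ ∑ i ∈ Finset.Icc (t j + 1) (t j + r), |(inner ℝ u₀ (X i ω) : ℝ)| :=
          Finset.abs_sum_le_sum_abs _ _
        _ ≤ ∑ i ∈ Finset.Icc (t j + 1) (t j + r), L := Finset.sum_le_sum fun i _ => hinnerb i ω
        _ = ((Finset.Icc (t j + 1) (t j + r)).card : ℝ) * L := by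
            rw [Finset.sum_const, nsmul_eq_mul]
        _ = c := by rw [hcard, hc_def]
    have hintinner : ∀ i : ℕ, Integrable (fun ω => (inner ℝ u₀ (X i ω) : ℝ)) P := fun i =>
      my_integrable_of_bounded (hmeasinner i).aestronglyMeasurable (hinnerb i)
    have hintξ : ∀ j, Integrable (ξ j) P := fun j =>
      my_integrable_of_bounded (hmeasξ j).aestronglyMeasurable (hbξ j)
    have hXint : ∀ i : ℕ, Integrable (X i) P := fun i =>
      (integrable_const L).mono' (hmeas i).aestronglyMeasurable
        (Eventually.of_forall fun ω => hL i ω)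
    have hzeroξ : ∀ j, ∫ ω, ξ j ω ∂P = 0 := by
      intro j
      show ∫ ω, ∑ i ∈ Finset.Icc (t j + 1) (t j + r), (inner ℝ u₀ (X i ω) : ℝ) ∂P = 0
      rw [integral_finset_sum _ fun i _ => hintinner i]
      refine Finset.sum_eq_zero fun i _ => ?_
      rw [integral_inner (hXint i) u₀, hzero i, inner_zero_right]
    have hchain : ∀ s : ℕ, ∀ i j : Fin k, (j : ℕ) = (i : ℕ) + s → t i + s * r ≤ t j := by
      intro s
      induction s with
      | zero =>
        intro i j hij
        have : j = i := Fin.ext (by omega)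
        subst this; simp
      | succ s ih =>
        intro i j hij
        have hjk : (i : ℕ) + s < k := by omega
        set j₀ : Fin k := ⟨(i : ℕ) + s, hjk⟩ with hj₀
        have h1 : t i + s * r ≤ t j₀ := ih i j₀ rfl
        have hlt : j₀ < j := Fin.lt_def.mpr (by show (i:ℕ) + s < (j:ℕ); omega)
        have h2 : t j₀ + r ≤ t j :=
          hsep j₀ j hlt (t j₀) (Finset.max'_mem _ _) (t j) (Finset.max'_mem _ _)
        have h3 : (s+1) * r = s * r + r := by ring
        omega
    have cross : ∀ j j' : Fin k, j < j' →
        |∫ ω, ξ j ω * ξ j' ω ∂P| ≤ 4 * (c * c) * alphaMix P X ((j' : ℕ) - (j : ℕ)) := by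
      intro j j' hjj'
      have hsm1 : StronglyMeasurable[pastSigma X (t j + r)] (ξ j) := by
        apply Measurable.stronglyMeasurable
        apply Finset.measurable_sum
        intro i hi
        have hi2 : i ≤ t j + r := (Finset.mem_Icc.mp hi).2
        exact Measurable.inner measurable_const (my_measurable_pastSigma X hi2)
      have hsm2 : StronglyMeasurable[futureSigma X (t j' + 1)] (ξ j') := by
        apply Measurable.stronglyMeasurable
        apply Finset.measurable_sum
        intro i hi
        have hi1 : t j' + 1 ≤ i := (Finset.mem_Icc.mp hi).1
        exact Measurable.inner measurable_const (my_measurable_futureSigma X hi1)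
      have hjlt : (j:ℕ) < (j':ℕ) := hjj'
      have harith : (t j + r) + ((j' : ℕ) - (j : ℕ)) ≤ t j' + 1 := by
        have hc1 := hchain ((j' : ℕ) - (j : ℕ)) j j' (by omega)
        have hs1 : 1 ≤ (j' : ℕ) - (j : ℕ) := by omega
        rcases Nat.exists_eq_add_of_le hs1 with ⟨s', hs'⟩
        have h2 : s' ≤ s' * r := Nat.le_mul_of_pos_right s' hr
        rw [hs'] at hc1 ⊢
        rw [Nat.add_mul, one_mul] at hc1
        omega
      have hα : ∀ A B : Set Ω, MeasurableSet[pastSigma X (t j + r)] A →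
          MeasurableSet[futureSigma X (t j' + 1)] B →
          |(P (A ∩ B)).toReal - (P A).toReal * (P B).toReal|
            ≤ alphaMix P X ((j':ℕ) - (j:ℕ)) := by
        intro A B hA hB
        have hle := my_futureSigma_antitone X harith (E := EuclideanSpace ℝ (Fin d))
        exact my_le_alphaMix P X _ (t j + r) hA (hle B hB)
      have hcov := my_cov_le (my_pastSigma_le X hmeas (t j + r))
        (my_futureSigma_le X hmeas (t j' + 1)) hc0 hc0 hsm1 hsm2 (hbξ j) (hbξ j') hα
      rwa [hzeroξ j, zero_mul, sub_zero] at hcov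
    have hintprod : ∀ j j' : Fin k, Integrable (fun ω => ξ j ω * ξ j' ω) P := fun j j' =>
      (hintξ j').bdd_mul (hmeasξ j).aestronglyMeasurable
        (Eventually.of_forall fun ω => by simpa [Real.norm_eq_abs] using hbξ j ω)
    set bnd : Fin k → Fin k → ℝ := fun j j' =>
      if j = j' then c * c
      else 4 * (c * c) *
        alphaMix P X (if (j:ℕ) < (j':ℕ) then (j':ℕ) - (j:ℕ) else (j:ℕ) - (j':ℕ))
      with hbnd_def
    have hterm : ∀ j j', ∫ ω, ξ j ω * ξ j' ω ∂P ≤ bnd j j' := by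
      intro j j'
      rcases eq_or_ne j j' with rfl | hne
      · have hd : bnd j j = c * c := by simp [hbnd_def]
        rw [hd]
        refine le_trans (integral_mono (hintprod j j) (integrable_const (c*c)) fun ω => ?_) ?_
        · rw [← abs_mul_abs_self (ξ j ω)]
          exact mul_le_mul (hbξ j ω) (hbξ j ω) (abs_nonneg _) hc0
        · rw [integral_const]; simp
      · have hvne : (j:ℕ) ≠ (j':ℕ) := fun h => hne (Fin.ext h)
        rcases Nat.lt_or_ge (j:ℕ) (j':ℕ) with hlt | hge
        · have hd : bnd j j' = 4 * (c * c) * alphaMix P X ((j':ℕ) - (j:ℕ)) := by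
            simp only [hbnd_def]; rw [if_neg hne, if_pos hlt]
          rw [hd]
          exact le_trans (le_abs_self _) (cross j j' (Fin.lt_def.mpr hlt))
        · have hlt' : (j':ℕ) < (j:ℕ) := by omega
          have hd : bnd j j' = 4 * (c * c) * alphaMix P X ((j:ℕ) - (j':ℕ)) := by
            simp only [hbnd_def]; rw [if_neg hne, if_neg (show ¬((j:ℕ) < (j':ℕ)) by omega)]
          rw [hd]
          have hsw : ∫ ω, ξ j ω * ξ j' ω ∂P = ∫ ω, ξ j' ω * ξ j ω ∂P :=
            integral_congr_ae (Eventually.of_forall fun ω => mul_comm _ _)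
          rw [hsw]
          exact le_trans (le_abs_self _) (cross j' j (Fin.lt_def.mpr hlt'))
    have hrowbound : ∀ j : Fin k, ∑ j' : Fin k, bnd j j' ≤ c * c + 8 * (c * c) * Aα := by
      intro j
      rw [← Finset.add_sum_erase Finset.univ (bnd j) (Finset.mem_univ j)]
      have hdiag : bnd j j = c * c := by simp [hbnd_def]
      have hoff : ∀ j' ∈ Finset.univ.erase j, bnd j j'
          = 4 * (c * c) *
            alphaMix P X (if (j:ℕ) < (j':ℕ) then (j':ℕ)-(j:ℕ) else (j:ℕ)-(j':ℕ)) := by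
        intro j' hj'
        have hne : j ≠ j' := (Finset.ne_of_mem_erase hj').symm
        simp only [hbnd_def]; rw [if_neg hne]
      have hkey : ∑ j' ∈ Finset.univ.erase j,
          alphaMix P X (if (j:ℕ) < (j':ℕ) then (j':ℕ)-(j:ℕ) else (j:ℕ)-(j':ℕ)) ≤ 2 * Aα := by
        have hsplit : Finset.univ.erase j
            = Finset.univ.filter (fun x : Fin k => (x:ℕ) < (j:ℕ))
              ∪ Finset.univ.filter (fun x : Fin k => (j:ℕ) < (x:ℕ)) := by
          ext x
          simp only [Finset.mem_erase, Finset.mem_union, Finset.mem_filter, Finset.mem_univ,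
            true_and, and_true, Fin.ext_iff]
          omega
        have hdisj : Disjoint (Finset.univ.filter (fun x : Fin k => (x:ℕ) < (j:ℕ)))
            (Finset.univ.filter (fun x : Fin k => (j:ℕ) < (x:ℕ))) := by
          rw [Finset.disjoint_left]
          intro x hx hx'
          simp only [Finset.mem_filter, Finset.mem_univ, true_and] at hx hx'
          omega
        rw [hsplit, Finset.sum_union hdisj]
        have hpart1 : ∑ x ∈ Finset.univ.filter (fun x : Fin k => (x:ℕ) < (j:ℕ)),
            alphaMix P X (if (j:ℕ) < (x:ℕ) then (x:ℕ)-(j:ℕ) else (j:ℕ)-(x:ℕ)) ≤ Aα := by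
          have e1 : ∀ x ∈ Finset.univ.filter (fun x : Fin k => (x:ℕ) < (j:ℕ)),
              alphaMix P X (if (j:ℕ) < (x:ℕ) then (x:ℕ)-(j:ℕ) else (j:ℕ)-(x:ℕ))
              = (fun m => alphaMix P X (m + 1)) ((j:ℕ) - (x:ℕ) - 1) := by
            intro x hx
            have hx' : (x:ℕ) < (j:ℕ) := by
              simpa using (Finset.mem_filter.mp hx).2
            simp only
            rw [if_neg (by omega)]
            congr 1
            omega
          rw [Finset.sum_congr rfl e1]
          have hinj : ∀ x ∈ Finset.univ.filter (fun x : Fin k => (x:ℕ) < (j:ℕ)),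
              ∀ y ∈ Finset.univ.filter (fun x : Fin k => (x:ℕ) < (j:ℕ)),
              (j:ℕ) - (x:ℕ) - 1 = (j:ℕ) - (y:ℕ) - 1 → x = y := by
            intro x hx y hy hxy
            have hx' : (x:ℕ) < (j:ℕ) := by simpa using (Finset.mem_filter.mp hx).2
            have hy' : (y:ℕ) < (j:ℕ) := by simpa using (Finset.mem_filter.mp hy).2
            exact Fin.ext (by omega)
          rw [← Finset.sum_image (g := fun x : Fin k => (j:ℕ) - (x:ℕ) - 1)
            (f := fun m => alphaMix P X (m + 1)) hinj]
          exact Summable.sum_le_tsum _ (fun m _ => my_alphaMix_nonneg P X (m+1)) hsum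
        have hpart2 : ∑ x ∈ Finset.univ.filter (fun x : Fin k => (j:ℕ) < (x:ℕ)),
            alphaMix P X (if (j:ℕ) < (x:ℕ) then (x:ℕ)-(j:ℕ) else (j:ℕ)-(x:ℕ)) ≤ Aα := by
          have e1 : ∀ x ∈ Finset.univ.filter (fun x : Fin k => (j:ℕ) < (x:ℕ)),
              alphaMix P X (if (j:ℕ) < (x:ℕ) then (x:ℕ)-(j:ℕ) else (j:ℕ)-(x:ℕ))
              = (fun m => alphaMix P X (m + 1)) ((x:ℕ) - (j:ℕ) - 1) := by
            intro x hx
            have hx' : (j:ℕ) < (x:ℕ) := by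
              simpa using (Finset.mem_filter.mp hx).2
            simp only
            rw [if_pos hx']
            congr 1
            omega
          rw [Finset.sum_congr rfl e1]
          have hinj : ∀ x ∈ Finset.univ.filter (fun x : Fin k => (j:ℕ) < (x:ℕ)),
              ∀ y ∈ Finset.univ.filter (fun x : Fin k => (j:ℕ) < (x:ℕ)),
              (x:ℕ) - (j:ℕ) - 1 = (y:ℕ) - (j:ℕ) - 1 → x = y := by
            intro x hx y hy hxy
            have hx' : (j:ℕ) < (x:ℕ) := by simpa using (Finset.mem_filter.mp hx).2
            have hy' : (j:ℕ) < (y:ℕ) := by simpa using (Finset.mem_filter.mp hy).2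
            exact Fin.ext (by omega)
          rw [← Finset.sum_image (g := fun x : Fin k => (x:ℕ) - (j:ℕ) - 1)
            (f := fun m => alphaMix P X (m + 1)) hinj]
          exact Summable.sum_le_tsum _ (fun m _ => my_alphaMix_nonneg P X (m+1)) hsum
        linarith
      calc bnd j j + ∑ j' ∈ Finset.univ.erase j, bnd j j'
          = c * c + 4 * (c * c) * ∑ j' ∈ Finset.univ.erase j,
              alphaMix P X (if (j:ℕ) < (j':ℕ) then (j':ℕ)-(j:ℕ) else (j:ℕ)-(j':ℕ)) := by
            rw [hdiag, Finset.sum_congr rfl hoff, ← Finset.mul_sum]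
        _ ≤ c * c + 4 * (c * c) * (2 * Aα) := by
            have h4 : (0:ℝ) ≤ 4 * (c * c) := by positivity
            have := mul_le_mul_of_nonneg_left hkey h4
            linarith
        _ = c * c + 8 * (c * c) * Aα := by ring
    have hmeasY : Measurable Y := Finset.measurable_sum _ fun j _ => hmeasξ j
    have hYsq : (Y ^ 2 : Ω → ℝ) = fun ω => ∑ j : Fin k, ∑ j' : Fin k, ξ j ω * ξ j' ω := by
      funext ω
      simp only [Pi.pow_apply, sq, hY_def]
      rw [Finset.sum_mul_sum]
    show variance Y P ≤ (c * c * (1 + 8 * Aα) + 1) * (k:ℝ)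
    calc variance Y P ≤ P[Y ^ 2] := variance_le_expectation_sq hmeasY.aestronglyMeasurable
      _ = ∑ j : Fin k, ∑ j' : Fin k, ∫ ω, ξ j ω * ξ j' ω ∂P := by
          rw [hYsq]
          rw [integral_finset_sum _ (fun j _ => integrable_finset_sum _ fun j' _ => hintprod j j')]
          exact Finset.sum_congr rfl fun j _ =>
            integral_finset_sum _ fun j' _ => hintprod j j'
      _ ≤ ∑ j : Fin k, ∑ j' : Fin k, bnd j j' :=
          Finset.sum_le_sum fun j _ => Finset.sum_le_sum fun j' _ => hterm j j'
      _ ≤ ∑ _j : Fin k, (c * c + 8 * (c * c) * Aα) :=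
          Finset.sum_le_sum fun j _ => hrowbound j
      _ = (k:ℝ) * (c * c + 8 * (c * c) * Aα) := by
          rw [Finset.sum_const, Finset.card_univ, Fintype.card_fin, nsmul_eq_mul]
      _ ≤ (c * c * (1 + 8 * Aα) + 1) * (k:ℝ) := by
          have hx : c * c + 8 * (c * c) * Aα ≤ c * c * (1 + 8 * Aα) + 1 := by nlinarith
          calc (k:ℝ) * (c * c + 8 * (c * c) * Aα)
              ≤ (k:ℝ) * (c * c * (1 + 8 * Aα) + 1) :=
                mul_le_mul_of_nonneg_left hx (Nat.cast_nonneg k)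
            _ = (c * c * (1 + 8 * Aα) + 1) * (k:ℝ) := mul_comm _ _


end
end

section
/- Let {X_j} be a sequence of zero-mean ℝ^d-valued random vectors, uniformly bounded in the sup norm, such that α(n) ≤ C δ^n for some C > 0 and δ ∈ (0,1). Let I₁, I₂, … be consecutive disjoint finite integer intervals covering ℕ (each of length at least 1), set A_j = Σ_{k∈I_j} X_k, and suppose that for some p > 2, sup_n sup_{|u|=1} ‖A_n · u‖_{L^p} < ∞. Then there exist constants C' > 0 and δ' ∈ (0,1) such that for all n, k ≥ 1 and all unit vectors u ∈ ℝ^d, |Cov(A_n · u, A_{n+k} · u)| ≤ C' (δ')^k. -/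
/- Statement 8: exponential decay of covariances between block sums
for exponentially fast α-mixing sequences. -/

open MeasureTheory ProbabilityTheory Filter Finset
open scoped NNReal ENNReal

noncomputable section

set_option linter.unusedSectionVars false

section A
variable {Ω : Type*} [mΩ : MeasurableSpace Ω] (P : Measure Ω) [IsProbabilityMeasure P]

lemma aux_integrable_of_bdd {f : Ω → ℝ} (hf : Measurable f) {M : ℝ} (hM : ∀ ω, |f ω| ≤ M) :
    Integrable f P :=
  ⟨hf.aestronglyMeasurable,
    HasFiniteIntegral.of_bounded (C := M) (ae_of_all _ fun ω => by
      simpa [Real.norm_eq_abs] using hM ω)⟩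

lemma covR_comm (f g : Ω → ℝ) : covR P f g = covR P g f := by
  simp [covR, mul_comm]

end A

lemma cov_reduce {Ω : Type*} {m mΩ : MeasurableSpace Ω} (hm : m ≤ mΩ)
    (P : @MeasureTheory.Measure Ω mΩ) [IsProbabilityMeasure P] {f g : Ω → ℝ}
    (hfm : Measurable[m] f) (hg : Measurable[mΩ] g)
    {Mf Mg : ℝ} (hMf : ∀ ω, |f ω| ≤ Mf) (hMg : ∀ ω, |g ω| ≤ Mg) :
    ∃ A : Set Ω, MeasurableSet[m] A ∧
      |@covR Ω mΩ P f g| ≤ 2 * Mf * |@covR Ω mΩ P (A.indicator 1) g| := by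
  have hΩ : Nonempty Ω := by
    by_contra h
    have h0 : P Set.univ = 0 := by
      simp [Set.univ_eq_empty_iff.2 (not_nonempty_iff.1 h)]
    simp [measure_univ] at h0
  obtain ⟨ω₀⟩ := hΩ
  have hMf0 : 0 ≤ Mf := le_trans (abs_nonneg _) (hMf ω₀)
  have hf : Measurable[mΩ] f := hfm.mono hm le_rfl
  set c := ∫ ω, g ω ∂P with hc
  set h : Ω → ℝ := fun ω => g ω - c with hh
  have hgint : Integrable g P := aux_integrable_of_bdd P hg hMg
  have hhint : Integrable h P := hgint.sub (integrable_const c)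
  have hint0 : ∫ ω, h ω ∂P = 0 := by
    rw [hh]
    simp only [integral_sub hgint (integrable_const c), integral_const, measure_univ]
    simp [hc]
  set H : Ω → ℝ := P[h|m] with hH
  have hHsm : StronglyMeasurable[m] H := stronglyMeasurable_condExp
  have hHint : Integrable H P := integrable_condExp
  have hfg_int : Integrable (fun ω => f ω * g ω) P := hgint.bdd_mul
      (c := Mf) hf.aestronglyMeasurable
      (ae_of_all _ fun ω => by simpa [Real.norm_eq_abs] using hMf ω)
  have hfint : Integrable f P := aux_integrable_of_bdd P hf hMf
  have step1 : @covR Ω mΩ P f g = ∫ ω, f ω * h ω ∂P := by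
    rw [covR]
    have heq : ∀ ω, f ω * h ω = f ω * g ω - f ω * c := fun ω => by rw [hh]; ring
    rw [integral_congr_ae (ae_of_all _ heq),
      integral_sub hfg_int (hfint.mul_const c), integral_mul_const]
  have hfh_int : Integrable (fun ω => f ω * h ω) P := hhint.bdd_mul
      (c := Mf) hf.aestronglyMeasurable
      (ae_of_all _ fun ω => by simpa [Real.norm_eq_abs] using hMf ω)
  have hmul := condExp_stronglyMeasurable_mul_of_bound hm hfm.stronglyMeasurable hhint Mf
      (ae_of_all _ fun ω => by simpa [Real.norm_eq_abs] using hMf ω)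
  have step2 : ∫ ω, f ω * h ω ∂P = ∫ ω, f ω * H ω ∂P := by
    calc ∫ ω, f ω * h ω ∂P = ∫ ω, (f * h) ω ∂P := rfl
      _ = ∫ ω, (P[f * h|m]) ω ∂P := (integral_condExp hm).symm
      _ = ∫ ω, (f * P[h|m]) ω ∂P := integral_congr_ae hmul
      _ = ∫ ω, f ω * H ω ∂P := rfl
  have hfH_int : Integrable (fun ω => f ω * H ω) P := hHint.bdd_mul
      (c := Mf) hf.aestronglyMeasurable
      (ae_of_all _ fun ω => by simpa [Real.norm_eq_abs] using hMf ω)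
  have step3 : |∫ ω, f ω * H ω ∂P| ≤ Mf * ∫ ω, |H ω| ∂P := by
    calc |∫ ω, f ω * H ω ∂P| ≤ ∫ ω, |f ω * H ω| ∂P := by
          simpa only [Real.norm_eq_abs] using
            norm_integral_le_integral_norm (μ := P) (fun ω => f ω * H ω)
      _ ≤ ∫ ω, Mf * |H ω| ∂P := by
          refine integral_mono hfH_int.abs (hHint.abs.const_mul Mf) fun ω => ?_
          rw [abs_mul]
          exact mul_le_mul_of_nonneg_right (hMf ω) (abs_nonneg _)
      _ = Mf * ∫ ω, |H ω| ∂P := integral_const_mul Mf _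
  set A : Set Ω := {ω | 0 ≤ H ω} with hAdef
  have hA : MeasurableSet[m] A := measurableSet_le measurable_const hHsm.measurable
  have hA' : MeasurableSet[mΩ] A := hm A hA
  have hHzero : ∫ ω, H ω ∂P = 0 := by rw [hH, integral_condExp hm]; exact hint0
  have hsplit : ∫ ω in A, H ω ∂P + ∫ ω in Aᶜ, H ω ∂P = 0 := by
    rw [integral_add_compl hA' hHint, hHzero]
  have step4 : ∫ ω, |H ω| ∂P = 2 * ∫ ω in A, H ω ∂P := by
    have h1 : ∫ ω in A, |H ω| ∂P = ∫ ω in A, H ω ∂P :=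
      setIntegral_congr_fun hA' fun ω hω => abs_of_nonneg hω
    have h2 : ∫ ω in Aᶜ, |H ω| ∂P = ∫ ω in Aᶜ, -H ω ∂P :=
      setIntegral_congr_fun hA'.compl fun ω hω => abs_of_neg (not_le.1 hω)
    calc ∫ ω, |H ω| ∂P = ∫ ω in A, |H ω| ∂P + ∫ ω in Aᶜ, |H ω| ∂P :=
          (integral_add_compl hA' hHint.abs).symm
      _ = ∫ ω in A, H ω ∂P - ∫ ω in Aᶜ, H ω ∂P := by
          rw [h1, h2, integral_neg]; ring
      _ = 2 * ∫ ω in A, H ω ∂P := by linarith [hsplit]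
  have step5 : ∫ ω in A, H ω ∂P = @covR Ω mΩ P (A.indicator 1) g := by
    rw [hH, setIntegral_condExp hm hhint hA]
    have hig : ∀ ω, A.indicator (1 : Ω → ℝ) ω * g ω = A.indicator g ω := fun ω => by
      by_cases hω : ω ∈ A <;> simp [hω]
    rw [covR, integral_congr_ae (ae_of_all _ hig), integral_indicator hA',
      integral_indicator_one hA']
    rw [hh, integral_sub (hgint.integrableOn) (integrableOn_const (measure_ne_top P A))]
    rw [setIntegral_const]
    simp only [smul_eq_mul, hc]
  refine ⟨A, hA, ?_⟩
  calc |@covR Ω mΩ P f g| = |∫ ω, f ω * H ω ∂P| := by rw [step1, step2]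
    _ ≤ Mf * ∫ ω, |H ω| ∂P := step3
    _ = 2 * Mf * @covR Ω mΩ P (A.indicator 1) g := by rw [step4, step5]; ring
    _ ≤ 2 * Mf * |@covR Ω mΩ P (A.indicator 1) g| := by
        have := le_abs_self (@covR Ω mΩ P (A.indicator 1) g)
        nlinarith

section B
variable {Ω E : Type*} [mΩ : MeasurableSpace Ω] [MeasurableSpace E]
  (P : Measure Ω) [IsProbabilityMeasure P] (X : ℕ → Ω → E)

lemma abs_le_alphaMix {j k : ℕ} {A B : Set Ω} (hA : MeasurableSet[pastSigma X j] A)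
    (hB : MeasurableSet[futureSigma X (j + k)] B) :
    |(P (A ∩ B)).toReal - (P A).toReal * (P B).toReal| ≤ alphaMix P X k := by
  apply le_csSup
  · refine ⟨1, ?_⟩
    rintro r ⟨j', A', B', hA', hB', rfl⟩
    have h1 : ∀ s : Set Ω, (P s).toReal ≤ 1 := fun s => by
      simpa using ENNReal.toReal_mono ENNReal.one_ne_top prob_le_one
    have h0 : ∀ s : Set Ω, 0 ≤ (P s).toReal := fun s => ENNReal.toReal_nonneg
    have := h1 (A' ∩ B'); have := h0 (A' ∩ B')
    have := h1 A'; have := h0 A'; have := h1 B'; have := h0 B'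
    rw [abs_le]
    constructor <;> nlinarith
  · exact ⟨j, A, B, hA, hB, rfl⟩

lemma pastSigma_le (hmeas : ∀ n, Measurable (X n)) (j : ℕ) : pastSigma X j ≤ mΩ :=
  iSup₂_le fun i _ => measurable_iff_comap_le.mp (hmeas i)

lemma futureSigma_le (hmeas : ∀ n, Measurable (X n)) (j : ℕ) : futureSigma X j ≤ mΩ :=
  iSup₂_le fun i _ => measurable_iff_comap_le.mp (hmeas i)

lemma cov_pair (hmeas : ∀ n, Measurable (X n)) {i k : ℕ} {f g : Ω → ℝ}
    (hfm : Measurable[pastSigma X i] f) (hgm : Measurable[futureSigma X (i + k)] g)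
    {Mf Mg : ℝ} (hMf : ∀ ω, |f ω| ≤ Mf) (hMg : ∀ ω, |g ω| ≤ Mg) :
    |covR P f g| ≤ 4 * (Mf * Mg) * alphaMix P X k := by
  have hΩ : Nonempty Ω := by
    by_contra h
    have h0 : P Set.univ = 0 := by
      simp [Set.univ_eq_empty_iff.2 (not_nonempty_iff.1 h)]
    simp [measure_univ] at h0
  obtain ⟨ω₀⟩ := hΩ
  have hMf0 : 0 ≤ Mf := le_trans (abs_nonneg _) (hMf ω₀)
  have hMg0 : 0 ≤ Mg := le_trans (abs_nonneg _) (hMg ω₀)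
  have hpast := pastSigma_le X hmeas i
  have hfut := futureSigma_le X hmeas (i + k)
  have hg : Measurable g := hgm.mono hfut le_rfl
  obtain ⟨A, hA, h1⟩ := cov_reduce hpast P hfm hg hMf hMg
  have hA' : MeasurableSet A := hpast A hA
  have hindm : Measurable (A.indicator (1 : Ω → ℝ)) := measurable_one.indicator hA'
  have hindb : ∀ ω, |A.indicator (1 : Ω → ℝ) ω| ≤ 1 := fun ω => by
    by_cases hω : ω ∈ A <;> simp [hω]
  obtain ⟨B, hB, h2⟩ := cov_reduce hfut P hgm hindm hMg hindb
  have hB' : MeasurableSet B := hfut B hB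
  have hval : covR P (B.indicator 1) (A.indicator 1)
      = (P (A ∩ B)).toReal - (P A).toReal * (P B).toReal := by
    have hmul : ∀ ω, B.indicator (1 : Ω → ℝ) ω * A.indicator 1 ω
        = (A ∩ B).indicator (1 : Ω → ℝ) ω := fun ω => by
      by_cases hωa : ω ∈ A <;> by_cases hωb : ω ∈ B <;>
        simp [hωa, hωb, Set.indicator, Set.mem_inter_iff]
    rw [covR, integral_congr_ae (ae_of_all _ hmul), integral_indicator_one (hA'.inter hB'),
      integral_indicator_one hA', integral_indicator_one hB']
    simp only [measureReal_def]
    ring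
  have h3 : |covR P (B.indicator 1) (A.indicator 1)| ≤ alphaMix P X k := by
    rw [hval]; exact abs_le_alphaMix P X hA hB
  have h1' : |covR P f g| ≤ 2 * Mf * |covR P g (A.indicator 1)| := by
    rwa [covR_comm P g (A.indicator 1)]
  have hnn : 0 ≤ |covR P (B.indicator 1) (A.indicator 1)| := abs_nonneg _
  have hnn2 : 0 ≤ |covR P g (A.indicator 1)| := abs_nonneg _
  nlinarith [mul_nonneg hMf0 hMg0, mul_nonneg hMf0 hnn, mul_nonneg hMf0 hnn2]

end B

lemma geom_aux {δ : ℝ} (h0 : 0 < δ) (h1 : δ < 1) (a b : ℕ) :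
    (∑ i ∈ Finset.Icc a b, δ ^ (b - i)) ≤ (1 - δ)⁻¹ := by
  have hsub : Finset.Icc a b ⊆ Finset.range (b + 1) := fun i hi => by
    simp only [Finset.mem_Icc] at hi
    exact Finset.mem_range.2 (Nat.lt_succ_of_le hi.2)
  have h2 : ∑ i ∈ Finset.Icc a b, δ ^ (b - i) ≤ ∑ i ∈ Finset.range (b + 1), δ ^ (b - i) :=
    Finset.sum_le_sum_of_subset_of_nonneg hsub fun i _ _ => le_of_lt (pow_pos h0 _)
  have h3 : ∑ i ∈ Finset.range (b + 1), δ ^ (b - i) = ∑ i ∈ Finset.range (b + 1), δ ^ i := by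
    simpa using Finset.sum_range_reflect (fun t => δ ^ t) (b + 1)
  have h4 : ∑ i ∈ Finset.range (b + 1), δ ^ i ≤ (1 - δ)⁻¹ := by
    have := Summable.sum_le_tsum (Finset.range (b + 1)) (fun i _ => le_of_lt (pow_pos h0 i))
      (summable_geometric_of_lt_one h0.le h1)
    rwa [tsum_geometric_of_lt_one h0.le h1] at this
  linarith

lemma geom_aux' {δ : ℝ} (h0 : 0 < δ) (h1 : δ < 1) (a b : ℕ) :
    (∑ j ∈ Finset.Icc a b, δ ^ (j - a)) ≤ (1 - δ)⁻¹ := by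
  have : ∑ j ∈ Finset.Icc a b, δ ^ (j - a) = ∑ j ∈ Finset.Icc a b, δ ^ (b - j) := by
    refine Finset.sum_nbij' (fun j => a + b - j) (fun j => a + b - j) ?_ ?_ ?_ ?_ ?_
    · intro j hj; simp only [Finset.mem_Icc] at hj ⊢; omega
    · intro j hj; simp only [Finset.mem_Icc] at hj ⊢; omega
    · intro j hj; simp only [Finset.mem_Icc] at hj; omega
    · intro j hj; simp only [Finset.mem_Icc] at hj; omega
    · intro j hj; simp only [Finset.mem_Icc] at hj
      congr 1; omega
  rw [this]; exact geom_aux h0 h1 a b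

lemma covR_sum {Ω : Type*} [mΩ : MeasurableSpace Ω] (P : Measure Ω) [IsProbabilityMeasure P]
    (s t : Finset ℕ) (F G : ℕ → Ω → ℝ)
    (hF : ∀ i, Measurable (F i)) (hG : ∀ j, Measurable (G j)) {MF MG : ℝ}
    (hMF : ∀ i ω, |F i ω| ≤ MF) (hMG : ∀ j ω, |G j ω| ≤ MG) :
    covR P (fun ω => ∑ i ∈ s, F i ω) (fun ω => ∑ j ∈ t, G j ω)
      = ∑ i ∈ s, ∑ j ∈ t, covR P (F i) (G j) := by
  have hFi : ∀ i, Integrable (F i) P := fun i => aux_integrable_of_bdd P (hF i) (hMF i)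
  have hGj : ∀ j, Integrable (G j) P := fun j => aux_integrable_of_bdd P (hG j) (hMG j)
  have hFG : ∀ i j, Integrable (fun ω => F i ω * G j ω) P := fun i j =>
    (hGj j).bdd_mul (c := MF) (hF i).aestronglyMeasurable
      (ae_of_all _ fun ω => by simpa [Real.norm_eq_abs] using hMF i ω)
  have e1 : (∫ ω, (∑ i ∈ s, F i ω) * (∑ j ∈ t, G j ω) ∂P)
      = ∑ i ∈ s, ∑ j ∈ t, ∫ ω, F i ω * G j ω ∂P := by
    have : ∀ ω, (∑ i ∈ s, F i ω) * (∑ j ∈ t, G j ω)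
        = ∑ i ∈ s, ∑ j ∈ t, F i ω * G j ω := fun ω => Finset.sum_mul_sum s t _ _
    rw [integral_congr_ae (ae_of_all _ this),
      integral_finset_sum s (fun i _ => integrable_finset_sum t (fun j _ => hFG i j))]
    exact Finset.sum_congr rfl fun i _ => integral_finset_sum t fun j _ => hFG i j
  have e2 : (∫ ω, (∑ i ∈ s, F i ω) ∂P) = ∑ i ∈ s, ∫ ω, F i ω ∂P :=
    integral_finset_sum s fun i _ => hFi i
  have e3 : (∫ ω, (∑ j ∈ t, G j ω) ∂P) = ∑ j ∈ t, ∫ ω, G j ω ∂P :=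
    integral_finset_sum t fun j _ => hGj j
  rw [covR, e1, e2, e3, Finset.sum_mul_sum]
  rw [← Finset.sum_sub_distrib]
  exact Finset.sum_congr rfl fun i _ => by rw [← Finset.sum_sub_distrib]; rfl

theorem cov_block_sums_exponential_decay
    {Ω : Type*} [MeasurableSpace Ω] (P : Measure Ω) [IsProbabilityMeasure P]
    {d : ℕ} (X : ℕ → Ω → EuclideanSpace ℝ (Fin d))
    (hmeas : ∀ n, Measurable (X n))
    (hzero : ∀ n, ∫ ω, X n ω ∂P = 0)
    (L : ℝ) (hL : ∀ n ω, ‖X n ω‖ ≤ L)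
    (C : ℝ) (hC : 0 < C) (δ : ℝ) (hδ : δ ∈ Set.Ioo (0 : ℝ) 1)
    (hα : ∀ n, alphaMix P X n ≤ C * δ ^ n)
    -- consecutive disjoint finite integer intervals I_j = {a_j, …, b_j} covering ℕ
    (a b : ℕ → ℕ) (ha0 : a 0 = 0) (hab : ∀ j, a j ≤ b j) (hconsec : ∀ j, a (j + 1) = b j + 1)
    -- uniform L^p bound on the block sums A_j, for some p > 2
    (p : ℝ) (hp : 2 < p) (K : ℝ)
    (hLp : ∀ (n : ℕ) (u : EuclideanSpace ℝ (Fin d)), ‖u‖ = 1 →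
      eLpNorm (fun ω => ∑ i ∈ Finset.Icc (a n) (b n), (inner ℝ u (X i ω) : ℝ))
          (ENNReal.ofReal p) P ≤ ENNReal.ofReal K) :
    ∃ C' : ℝ, 0 < C' ∧ ∃ δ' : ℝ, δ' ∈ Set.Ioo (0 : ℝ) 1 ∧
      ∀ (n k : ℕ), 1 ≤ k → ∀ u : EuclideanSpace ℝ (Fin d), ‖u‖ = 1 →
        |covR P (fun ω => ∑ i ∈ Finset.Icc (a n) (b n), (inner ℝ u (X i ω) : ℝ))
            (fun ω => ∑ i ∈ Finset.Icc (a (n + k)) (b (n + k)), (inner ℝ u (X i ω) : ℝ))| ≤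
          C' * δ' ^ k := by
  obtain ⟨hδ0, hδ1⟩ := hδ
  have hΩ : Nonempty Ω := by
    by_contra h
    have h0 : P Set.univ = 0 := by
      simp [Set.univ_eq_empty_iff.2 (not_nonempty_iff.1 h)]
    simp [measure_univ] at h0
  obtain ⟨ω₀⟩ := hΩ
  have hL0 : 0 ≤ L := le_trans (norm_nonneg _) (hL 0 ω₀)
  set S : ℝ := (1 - δ)⁻¹ with hSdef
  have hS0 : 0 ≤ S := inv_nonneg.2 (by linarith)
  refine ⟨4 * (L * L) * C * (S * S) + 1, by positivity, δ, ⟨hδ0, hδ1⟩, ?_⟩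
  intro n k hk u hu
  set F : ℕ → Ω → ℝ := fun i ω => (inner ℝ u (X i ω) : ℝ) with hFdef
  have hFmeas : ∀ i, Measurable (F i) := fun i => measurable_const.inner (hmeas i)
  have hFbdd : ∀ i, ∀ ω, |F i ω| ≤ L := fun i ω =>
    (abs_real_inner_le_norm u (X i ω)).trans (by rw [hu, one_mul]; exact hL i ω)
  -- the gap between block n and block n+k is at least k
  have hgap : ∀ m : ℕ, 1 ≤ m → b n + m ≤ a (n + m) := by
    intro m hm
    induction m with
    | zero => omega
    | succ m ih =>
      rcases Nat.eq_zero_or_pos m with hm0 | hm1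
      · subst hm0; rw [hconsec n]
      · have h1 := ih hm1
        have h2 := hconsec (n + m)
        have h3 := hab (n + m)
        have h4 : a (n + (m + 1)) = a (n + m + 1) := rfl
        omega
  have hbk : b n + k ≤ a (n + k) := hgap k hk
  -- expand the covariance bilinearly
  rw [covR_sum P (Finset.Icc (a n) (b n)) (Finset.Icc (a (n + k)) (b (n + k))) F F
    hFmeas hFmeas (MF := L) (MG := L) hFbdd hFbdd]
  -- per-pair bound
  have key : ∀ i ∈ Finset.Icc (a n) (b n), ∀ j ∈ Finset.Icc (a (n + k)) (b (n + k)),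
      |covR P (F i) (F j)| ≤
        4 * (L * L) * C * δ ^ k * (δ ^ (b n - i) * δ ^ (j - a (n + k))) := by
    intro i hi j hj
    simp only [Finset.mem_Icc] at hi hj
    have hij : i ≤ j := by omega
    have hfm : Measurable[pastSigma X i] (F i) := by
      have hX : Measurable[MeasurableSpace.comap (X i) inferInstance] (X i) :=
        measurable_iff_comap_le.2 le_rfl
      have h2 : Measurable[MeasurableSpace.comap (X i) inferInstance] (F i) :=
        Measurable.inner measurable_const hX
      exact h2.mono (le_iSup₂ (f := fun i' (_ : i' ∈ Set.Iic i) =>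
        MeasurableSpace.comap (X i') inferInstance) i (Set.mem_Iic.2 le_rfl)) le_rfl
    have hgm : Measurable[futureSigma X (i + (j - i))] (F j) := by
      have hle : i + (j - i) ≤ j := by omega
      have hX : Measurable[MeasurableSpace.comap (X j) inferInstance] (X j) :=
        measurable_iff_comap_le.2 le_rfl
      have h2 : Measurable[MeasurableSpace.comap (X j) inferInstance] (F j) :=
        Measurable.inner measurable_const hX
      exact h2.mono (le_iSup₂ (f := fun i' (_ : i' ∈ Set.Ici (i + (j - i))) =>
        MeasurableSpace.comap (X i') inferInstance) j (Set.mem_Ici.2 hle)) le_rfl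
    have hpair := cov_pair P X hmeas hfm hgm (hFbdd i) (hFbdd j)
    have hα' := hα (j - i)
    have hδsplit : δ ^ (j - i) ≤ δ ^ (b n - i) * (δ ^ k * δ ^ (j - a (n + k))) := by
      have hsum : (b n - i) + ((a (n + k) - b n) + (j - a (n + k))) = j - i := by omega
      rw [← hsum, pow_add, pow_add]
      have hmid : δ ^ (a (n + k) - b n) ≤ δ ^ k :=
        pow_le_pow_of_le_one hδ0.le hδ1.le (by omega)
      have hp1 : (0 : ℝ) < δ ^ (b n - i) := pow_pos hδ0 _
      have hp2 : (0 : ℝ) < δ ^ (j - a (n + k)) := pow_pos hδ0 _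
      exact mul_le_mul_of_nonneg_left (mul_le_mul_of_nonneg_right hmid hp2.le) hp1.le
    have hLL : (0 : ℝ) ≤ 4 * (L * L) := by positivity
    calc |covR P (F i) (F j)| ≤ 4 * (L * L) * alphaMix P X (j - i) := hpair
      _ ≤ 4 * (L * L) * (C * δ ^ (j - i)) := mul_le_mul_of_nonneg_left hα' hLL
      _ ≤ 4 * (L * L) * (C * (δ ^ (b n - i) * (δ ^ k * δ ^ (j - a (n + k))))) := by
          apply mul_le_mul_of_nonneg_left _ hLL
          exact mul_le_mul_of_nonneg_left hδsplit hC.le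
      _ = 4 * (L * L) * C * δ ^ k * (δ ^ (b n - i) * δ ^ (j - a (n + k))) := by ring
  -- sum everything up
  have hsum1 := geom_aux hδ0 hδ1 (a n) (b n)
  have hsum2 := geom_aux' hδ0 hδ1 (a (n + k)) (b (n + k))
  have hpos1 : (0 : ℝ) ≤ ∑ i ∈ Finset.Icc (a n) (b n), δ ^ (b n - i) :=
    Finset.sum_nonneg fun i _ => (pow_pos hδ0 _).le
  have hpos2 : (0 : ℝ) ≤ ∑ j ∈ Finset.Icc (a (n + k)) (b (n + k)), δ ^ (j - a (n + k)) :=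
    Finset.sum_nonneg fun j _ => (pow_pos hδ0 _).le
  have hδk : (0 : ℝ) < δ ^ k := pow_pos hδ0 _
  calc |∑ i ∈ Finset.Icc (a n) (b n), ∑ j ∈ Finset.Icc (a (n + k)) (b (n + k)),
        covR P (F i) (F j)|
      ≤ ∑ i ∈ Finset.Icc (a n) (b n), |∑ j ∈ Finset.Icc (a (n + k)) (b (n + k)),
        covR P (F i) (F j)| := Finset.abs_sum_le_sum_abs _ _
    _ ≤ ∑ i ∈ Finset.Icc (a n) (b n), ∑ j ∈ Finset.Icc (a (n + k)) (b (n + k)),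
        |covR P (F i) (F j)| :=
        Finset.sum_le_sum fun i _ => Finset.abs_sum_le_sum_abs _ _
    _ ≤ ∑ i ∈ Finset.Icc (a n) (b n), ∑ j ∈ Finset.Icc (a (n + k)) (b (n + k)),
        4 * (L * L) * C * δ ^ k * (δ ^ (b n - i) * δ ^ (j - a (n + k))) :=
        Finset.sum_le_sum fun i hi => Finset.sum_le_sum fun j hj => key i hi j hj
    _ = 4 * (L * L) * C * δ ^ k *
        ((∑ i ∈ Finset.Icc (a n) (b n), δ ^ (b n - i)) *
          (∑ j ∈ Finset.Icc (a (n + k)) (b (n + k)), δ ^ (j - a (n + k)))) := by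
        rw [Finset.sum_mul_sum]
        simp_rw [Finset.mul_sum]
    _ ≤ 4 * (L * L) * C * δ ^ k * (S * S) := by
        apply mul_le_mul_of_nonneg_left _ (by positivity)
        exact mul_le_mul hsum1 hsum2 hpos2 hS0
    _ ≤ (4 * (L * L) * C * (S * S) + 1) * δ ^ k := by nlinarith


end
end

section
/- Let {ξ_j} be a Markov chain with transition operators Q_j g(x) = E[g(ξ_{j+1}) | ξ_j = x], and for each j let ρ_j be the L²-operator norm of the restriction of Q_j to zero-mean square-integrable functions of ξ_{j+1}, i.e., ρ_j = sup{ ‖E[g(ξ_{j+1})|ξ_j]‖_{L²} / ‖g(ξ_{j+1})‖_{L²} : E[g(ξ_{j+1})] = 0, 0 < ‖g(ξ_{j+1})‖_{L²} < ∞ }. Suppose ρ := sup_j ρ_j < 1. Let {f_j} be a uniformly bounded sequence of measurable ℝ^d-valued functions, X_j = f_j(ξ_j), and suppose there exists C ≥ 1 such that for each j the ratio between the largest and smallest eigenvalues of Cov(X_j) is bounded by C. Then Assumption (V) holds: there exist constants C₁, C₂ ≥ 1 such that for any n ≤ m with ‖S_{n,m}‖_{L²} ≥ C₁, where S_{n,m}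 = Σ_{j=n}^m (X_j − E[X_j]), the ratio between the largest and smallest eigenvalues of Cov(S_{n,m}) is at most C₂. -/
/- Statement 10: Assumption (V) for additive functionals of Markov chains that are
uniformly L²-contracting (ρ = sup_j ρ_j < 1). -/

open MeasureTheory ProbabilityTheory Filter Finset
open scoped NNReal ENNReal

noncomputable section

section AuxiliaryLemmas

variable {Ω : Type*} [MeasurableSpace Ω] {𝒳 : ℕ → Type*} [∀ j, MeasurableSpace (𝒳 j)]

def chainFilt (ξ : ∀ j, Ω → 𝒳 j) (j : ℕ) : MeasurableSpace Ω :=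
  ⨆ i ∈ Set.Iic j, MeasurableSpace.comap (ξ i) inferInstance

lemma chainFilt_le {ξ : ∀ j, Ω → 𝒳 j} (hξ : ∀ j, Measurable (ξ j)) (j : ℕ) :
    chainFilt ξ j ≤ ‹MeasurableSpace Ω› :=
  iSup₂_le fun i _ => (hξ i).comap_le

lemma stronglyMeasurable_chainFilt {ξ : ∀ j, Ω → 𝒳 j} {r j : ℕ} (hrj : r ≤ j)
    {ψ : 𝒳 r → ℝ} (hψ : Measurable ψ) :
    StronglyMeasurable[chainFilt ξ j] fun ω => ψ (ξ r ω) := by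
  have h1 : MeasurableSpace.comap (ξ r) inferInstance ≤ chainFilt ξ j :=
    le_iSup₂ (f := fun i _ => MeasurableSpace.comap (ξ i) inferInstance) r (Set.mem_Iic.mpr hrj)
  have h2 : Measurable[MeasurableSpace.comap (ξ r) inferInstance] (ξ r) :=
    Measurable.of_comap_le le_rfl
  exact ((hψ.comp h2).mono h1 le_rfl).stronglyMeasurable

def Gaux (Q : ∀ j, Kernel (𝒳 j) (𝒳 (j + 1))) (g : ∀ j, 𝒳 j → ℝ) (m i : ℕ) : 𝒳 i → ℝ :=
  fun x =>
    if h : m < i then 0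
    else g i x + ∫ y, Gaux Q g m (i + 1) y ∂(Q i x)
  termination_by m + 1 - i
  decreasing_by omega

lemma Gaux_of_top (Q : ∀ j, Kernel (𝒳 j) (𝒳 (j + 1))) (g : ∀ j, 𝒳 j → ℝ) {m i : ℕ}
    (h : m < i) (x : 𝒳 i) : Gaux Q g m i x = 0 := by
  rw [Gaux]; simp [h]

lemma Gaux_of_le (Q : ∀ j, Kernel (𝒳 j) (𝒳 (j + 1))) (g : ∀ j, 𝒳 j → ℝ) {m i : ℕ}
    (h : i ≤ m) (x : 𝒳 i) :
    Gaux Q g m i x = g i x + ∫ y, Gaux Q g m (i + 1) y ∂(Q i x) := by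
  rw [Gaux]; simp [Nat.not_lt.mpr h]

lemma integrable_of_abs_le {μ : Measure Ω} [IsFiniteMeasure μ] {h : Ω → ℝ} {c : ℝ}
    (hm : AEStronglyMeasurable h μ) (hb : ∀ ω, |h ω| ≤ c) : Integrable h μ :=
  (integrable_const c).mono' hm (ae_of_all _ fun ω => by simpa [Real.norm_eq_abs] using hb ω)

lemma Gaux_measurable (Q : ∀ j, Kernel (𝒳 j) (𝒳 (j + 1))) [∀ j, IsMarkovKernel (Q j)]
    (g : ∀ j, 𝒳 j → ℝ) (hg : ∀ j, Measurable (g j)) (m : ℕ) :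
    ∀ i, Measurable (Gaux Q g m i) := by
  suffices H : ∀ t i, m + 1 - i ≤ t → Measurable (Gaux Q g m i) by
    exact fun i => H (m + 1 - i) i le_rfl
  intro t
  induction t with
  | zero =>
    intro i hi
    have h : m < i := by omega
    simpa [funext fun x => Gaux_of_top Q g h x] using measurable_const
  | succ t ih =>
    intro i hi
    by_cases h : m < i
    · simpa [funext fun x => Gaux_of_top Q g h x] using measurable_const
    · have h' : i ≤ m := Nat.not_lt.mp h
      have hmeas : Measurable fun x => ∫ y, Gaux Q g m (i + 1) y ∂(Q i x) := by
        have := (ih (i + 1) (by omega)).stronglyMeasurable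
        exact (MeasureTheory.StronglyMeasurable.integral_kernel_prod_right
          (κ := Q i) (f := fun _ y => Gaux Q g m (i + 1) y)
          (this.comp_measurable measurable_snd)).measurable
      have heq : Gaux Q g m i = fun x => g i x + ∫ y, Gaux Q g m (i + 1) y ∂(Q i x) :=
        funext fun x => Gaux_of_le Q g h' x
      rw [heq]
      exact (hg i).add hmeas

lemma Gaux_bound (Q : ∀ j, Kernel (𝒳 j) (𝒳 (j + 1))) [∀ j, IsMarkovKernel (Q j)]
    (g : ∀ j, 𝒳 j → ℝ) (c : ℝ) (hgb : ∀ j x, |g j x| ≤ c) (m : ℕ) :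
    ∀ i x, |Gaux Q g m i x| ≤ (m + 1 - i : ℕ) * c := by
  suffices H : ∀ t i, m + 1 - i ≤ t → ∀ x, |Gaux Q g m i x| ≤ (m + 1 - i : ℕ) * c by
    exact fun i => H (m + 1 - i) i le_rfl
  intro t
  induction t with
  | zero =>
    intro i hi x
    have h : m < i := by omega
    have h0 : (m + 1 - i : ℕ) = 0 := by omega
    simp [Gaux_of_top Q g h x, h0]
  | succ t ih =>
    intro i hi x
    by_cases h : m < i
    · have h0 : (m + 1 - i : ℕ) = 0 := by omega
      simp [Gaux_of_top Q g h x, h0]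
    · have h' : i ≤ m := Nat.not_lt.mp h
      rw [Gaux_of_le Q g h' x]
      have hint : |∫ y, Gaux Q g m (i + 1) y ∂(Q i x)| ≤ (m + 1 - (i+1) : ℕ) * c := by
        have := norm_integral_le_of_norm_le_const (μ := Q i x)
          (f := fun y => Gaux Q g m (i + 1) y) (C := (m + 1 - (i+1) : ℕ) * c)
          (ae_of_all _ fun y => by simpa [Real.norm_eq_abs] using ih (i+1) (by omega) y)
        simpa [Real.norm_eq_abs, measure_univ] using this
      calc |g i x + ∫ y, Gaux Q g m (i + 1) y ∂(Q i x)|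
          ≤ |g i x| + |∫ y, Gaux Q g m (i + 1) y ∂(Q i x)| := abs_add_le _ _
        _ ≤ c + (m + 1 - (i+1) : ℕ) * c := add_le_add (hgb i x) hint
        _ ≤ (m + 1 - i : ℕ) * c := by
            have h1 : (m + 1 - (i+1) : ℕ) + 1 = (m + 1 - i : ℕ) := by omega
            rw [← h1]
            push_cast
            linarith

lemma ofReal_integral_sq_eq {P : Measure Ω} {h : Ω → ℝ}
    (hsq : Integrable (fun ω => h ω ^ 2) P) :
    ENNReal.ofReal (∫ ω, h ω ^ 2 ∂P) = eLpNorm h 2 P ^ 2 := by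
  rw [ofReal_integral_eq_lintegral_ofReal hsq (ae_of_all _ fun ω => sq_nonneg _)]
  rw [eLpNorm_eq_lintegral_rpow_enorm_toReal (by norm_num) (by norm_num)]
  rw [← ENNReal.rpow_natCast _ 2, ← ENNReal.rpow_mul]
  norm_num
  congr 1
  ext ω
  rw [← Real.rpow_natCast (h ω) 2]
  norm_num
  rw [← Real.enorm_eq_ofReal (sq_nonneg _), enorm_pow]

lemma integral_sq_eq_toReal {P : Measure Ω} {h : Ω → ℝ}
    (hsq : Integrable (fun ω => h ω ^ 2) P) :
    ∫ ω, h ω ^ 2 ∂P = ((eLpNorm h 2 P).toReal) ^ 2 := by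
  have h1 := ofReal_integral_sq_eq hsq
  have h2 : (0 : ℝ) ≤ ∫ ω, h ω ^ 2 ∂P := integral_nonneg fun ω => sq_nonneg _
  calc ∫ ω, h ω ^ 2 ∂P = (ENNReal.ofReal (∫ ω, h ω ^ 2 ∂P)).toReal :=
        (ENNReal.toReal_ofReal h2).symm
    _ = ((eLpNorm h 2 P) ^ 2).toReal := by rw [h1]
    _ = _ := by rw [ENNReal.toReal_pow]

section Markov
variable {P : Measure Ω} [IsProbabilityMeasure P] {ξ : ∀ j, Ω → 𝒳 j}
  {Q : ∀ j, Kernel (𝒳 j) (𝒳 (j + 1))} [∀ j, IsMarkovKernel (Q j)]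

lemma markov_setIntegral (hξ : ∀ j, Measurable (ξ j))
    (hMarkov : ∀ (j : ℕ) (B : Set (𝒳 (j + 1))), MeasurableSet B →
      (P[fun ω => B.indicator (fun _ => (1 : ℝ)) (ξ (j + 1) ω) | chainFilt ξ j]) =ᵐ[P]
        fun ω => ((Q j) (ξ j ω) B).toReal)
    (j : ℕ) {φ : 𝒳 (j + 1) → ℝ} (hφ : Measurable φ) {c : ℝ} (hφb : ∀ x, |φ x| ≤ c)
    {s : Set Ω} (hs : MeasurableSet[chainFilt ξ j] s) :
    ∫ ω in s, (∫ y, φ y ∂(Q j (ξ j ω))) ∂P = ∫ ω in s, φ (ξ (j + 1) ω) ∂P := by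
  have hle := chainFilt_le hξ j
  haveI : SigmaFinite (P.trim hle) := (isFiniteMeasure_trim hle).toSigmaFinite
  have hsm : MeasurableSet s := hle s hs
  have key : (((P.restrict s).map (ξ j)) ⊗ₘ Q j).map Prod.snd
      = (P.restrict s).map (ξ (j + 1)) := by
    ext B hB
    rw [Measure.map_apply measurable_snd hB, Measure.compProd_apply (measurable_snd hB),
      Measure.map_apply (hξ (j + 1)) hB]
    have hpre : ∀ x : 𝒳 j, (Prod.mk x ⁻¹' (Prod.snd ⁻¹' B)) = B := fun x => rfl
    simp_rw [hpre]
    rw [lintegral_map (Kernel.measurable_coe (Q j) hB) (hξ j)]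
    -- reduce to the indicator identity from hMarkov
    have hindint : Integrable (fun ω => B.indicator (fun _ => (1 : ℝ)) (ξ (j + 1) ω)) P := by
      refine integrable_of_abs_le (((measurable_const.indicator hB).comp (hξ (j+1))).aestronglyMeasurable) (c := 1) fun ω => ?_
      by_cases hω : ξ (j + 1) ω ∈ B <;> simp [hω]
    have h1 : ∫ ω in s, ((Q j (ξ j ω)) B).toReal ∂P
        = ∫ ω in s, B.indicator (fun _ => (1 : ℝ)) (ξ (j + 1) ω) ∂P := by
      rw [← setIntegral_condExp hle hindint hs]
      exact setIntegral_congr_ae hsm ((hMarkov j B hB).mono fun ω hω _ => hω.symm)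
    have h2 : ∫ ω in s, ((Q j (ξ j ω)) B).toReal ∂P
        = (∫⁻ ω in s, (Q j (ξ j ω)) B ∂P).toReal := by
      exact integral_toReal (f := fun ω => (Q j (ξ j ω)) B)
        (((Kernel.measurable_coe (Q j) hB).comp (hξ j)).aemeasurable.restrict)
        (ae_of_all _ fun ω => measure_lt_top _ _)
    have h3 : ∫ ω in s, B.indicator (fun _ => (1 : ℝ)) (ξ (j + 1) ω) ∂P
        = ((P.restrict s) (ξ (j + 1) ⁻¹' B)).toReal := by
      have : ∀ ω, B.indicator (fun _ => (1 : ℝ)) (ξ (j + 1) ω)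
          = (ξ (j + 1) ⁻¹' B).indicator (fun _ => (1 : ℝ)) ω := fun ω => by
        by_cases hω : ξ (j + 1) ω ∈ B <;> simp [Set.indicator_apply, hω, Set.mem_preimage]
      simp_rw [this]
      rw [integral_indicator_const (1 : ℝ) ((hξ (j + 1)) hB)]
      simp
      rfl
    have hfin1 : (∫⁻ ω in s, (Q j (ξ j ω)) B ∂P) ≠ ⊤ := by
      have hle1 : (∫⁻ ω in s, (Q j (ξ j ω)) B ∂P) ≤ ∫⁻ _ in s, (1 : ℝ≥0∞) ∂P :=
        lintegral_mono fun ω => prob_le_one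
      refine ne_of_lt (lt_of_le_of_lt hle1 ?_)
      simp only [lintegral_one]
      exact measure_lt_top _ _
    have hfin2 : ((P.restrict s) (ξ (j + 1) ⁻¹' B)) ≠ ⊤ := measure_ne_top _ _
    have := h1
    rw [h2, h3] at this
    exact (ENNReal.toReal_eq_toReal_iff' hfin1 hfin2).mp this
  -- now the integral computation
  have hQφmeas : Measurable fun x => ∫ y, φ y ∂(Q j x) :=
    (MeasureTheory.StronglyMeasurable.integral_kernel_prod_right
      (κ := Q j) (f := fun _ y => φ y)
      (hφ.stronglyMeasurable.comp_measurable measurable_snd)).measurable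
  haveI : IsFiniteMeasure ((P.restrict s).map (ξ j)) := by
    exact Measure.isFiniteMeasure_map _ _
  have hint2 : Integrable (fun p : 𝒳 j × 𝒳 (j + 1) => φ p.2) (((P.restrict s).map (ξ j)) ⊗ₘ Q j) :=
    integrable_of_abs_le ((hφ.comp measurable_snd).aestronglyMeasurable) (fun p => hφb p.2)
  calc ∫ ω in s, (∫ y, φ y ∂(Q j (ξ j ω))) ∂P
      = ∫ x, (∫ y, φ y ∂(Q j x)) ∂((P.restrict s).map (ξ j)) :=
        (integral_map (hξ j).aemeasurable hQφmeas.aestronglyMeasurable).symm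
    _ = ∫ p, φ p.2 ∂(((P.restrict s).map (ξ j)) ⊗ₘ Q j) :=
        (Measure.integral_compProd hint2).symm
    _ = ∫ y, φ y ∂((((P.restrict s).map (ξ j)) ⊗ₘ Q j).map Prod.snd) :=
        (integral_map measurable_snd.aemeasurable hφ.aestronglyMeasurable).symm
    _ = ∫ y, φ y ∂((P.restrict s).map (ξ (j + 1))) := by rw [key]
    _ = ∫ ω in s, φ (ξ (j + 1) ω) ∂P :=
        integral_map (hξ (j + 1)).aemeasurable hφ.aestronglyMeasurable

lemma condexp_markov (hξ : ∀ j, Measurable (ξ j))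
    (hMarkov : ∀ (j : ℕ) (B : Set (𝒳 (j + 1))), MeasurableSet B →
      (P[fun ω => B.indicator (fun _ => (1 : ℝ)) (ξ (j + 1) ω) | chainFilt ξ j]) =ᵐ[P]
        fun ω => ((Q j) (ξ j ω) B).toReal)
    (j : ℕ) {φ : 𝒳 (j + 1) → ℝ} (hφ : Measurable φ) {c : ℝ} (hφb : ∀ x, |φ x| ≤ c) :
    (P[fun ω => φ (ξ (j + 1) ω) | chainFilt ξ j]) =ᵐ[P]
      fun ω => ∫ y, φ y ∂(Q j (ξ j ω)) := by
  have hle := chainFilt_le hξ j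
  haveI : SigmaFinite (P.trim hle) := (isFiniteMeasure_trim hle).toSigmaFinite
  have hQφmeas : Measurable fun x => ∫ y, φ y ∂(Q j x) :=
    (MeasureTheory.StronglyMeasurable.integral_kernel_prod_right
      (κ := Q j) (f := fun _ y => φ y)
      (hφ.stronglyMeasurable.comp_measurable measurable_snd)).measurable
  have hQφb : ∀ ω, |∫ y, φ y ∂(Q j (ξ j ω))| ≤ c := fun ω => by
    have := norm_integral_le_of_norm_le_const (μ := Q j (ξ j ω))
      (f := fun y => φ y) (C := c) (ae_of_all _ fun y => by simpa [Real.norm_eq_abs] using hφb y)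
    simpa [Real.norm_eq_abs, measure_univ] using this
  have hint : Integrable (fun ω => φ (ξ (j + 1) ω)) P :=
    integrable_of_abs_le ((hφ.comp (hξ (j + 1))).aestronglyMeasurable) (fun ω => hφb _)
  refine (ae_eq_condExp_of_forall_setIntegral_eq hle hint
    (fun s _ _ => (integrable_of_abs_le ((hQφmeas.comp (hξ j)).aestronglyMeasurable)
      (fun ω => hQφb ω)).integrableOn)
    (fun s hs _ => markov_setIntegral hξ hMarkov j hφ hφb hs)
    ((stronglyMeasurable_chainFilt (ξ := ξ) le_rfl hQφmeas).aestronglyMeasurable)).symm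

lemma markov_pullout (hξ : ∀ j, Measurable (ξ j))
    (hMarkov : ∀ (j : ℕ) (B : Set (𝒳 (j + 1))), MeasurableSet B →
      (P[fun ω => B.indicator (fun _ => (1 : ℝ)) (ξ (j + 1) ω) | chainFilt ξ j]) =ᵐ[P]
        fun ω => ((Q j) (ξ j ω) B).toReal)
    (j : ℕ) {φ : 𝒳 (j + 1) → ℝ} (hφ : Measurable φ) {c : ℝ} (hφb : ∀ x, |φ x| ≤ c)
    {Z : Ω → ℝ} (hZ : StronglyMeasurable[chainFilt ξ j] Z) {cZ : ℝ} (hZb : ∀ ω, |Z ω| ≤ cZ) :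
    ∫ ω, φ (ξ (j + 1) ω) * Z ω ∂P = ∫ ω, (∫ y, φ y ∂(Q j (ξ j ω))) * Z ω ∂P := by
  have hle := chainFilt_le hξ j
  haveI : SigmaFinite (P.trim hle) := (isFiniteMeasure_trim hle).toSigmaFinite
  have hint : Integrable (fun ω => φ (ξ (j + 1) ω)) P :=
    integrable_of_abs_le ((hφ.comp (hξ (j + 1))).aestronglyMeasurable) (fun ω => hφb _)
  have hZm : AEStronglyMeasurable Z P := (hZ.mono hle).aestronglyMeasurable
  have hintZφ : Integrable (fun ω => Z ω * φ (ξ (j + 1) ω)) P :=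
    integrable_of_abs_le (hZm.mul (hφ.comp (hξ (j + 1))).aestronglyMeasurable)
      (c := |cZ| * |c|) fun ω => by
        rw [abs_mul]
        exact mul_le_mul ((hZb ω).trans (le_abs_self _)) ((hφb _).trans (le_abs_self _))
          (abs_nonneg _) (abs_nonneg _)
  have h1 : P[fun ω => Z ω * φ (ξ (j + 1) ω) | chainFilt ξ j]
      =ᵐ[P] Z * P[fun ω => φ (ξ (j + 1) ω) | chainFilt ξ j] :=
    condExp_stronglyMeasurable_mul_of_bound hle hZ hint cZ
      (ae_of_all _ fun ω => by simpa [Real.norm_eq_abs] using hZb ω)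
  have h2 := condexp_markov hξ hMarkov j hφ hφb
  calc ∫ ω, φ (ξ (j + 1) ω) * Z ω ∂P
      = ∫ ω, Z ω * φ (ξ (j + 1) ω) ∂P := by simp_rw [mul_comm]
    _ = ∫ ω, (P[fun ω => Z ω * φ (ξ (j + 1) ω) | chainFilt ξ j]) ω ∂P :=
        (integral_condExp hle).symm
    _ = ∫ ω, Z ω * (P[fun ω => φ (ξ (j + 1) ω) | chainFilt ξ j]) ω ∂P :=
        integral_congr_ae (h1.mono fun ω hω => by simpa using hω)
    _ = ∫ ω, Z ω * (∫ y, φ y ∂(Q j (ξ j ω))) ∂P :=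
        integral_congr_ae (h2.mono fun ω hω => by dsimp only; rw [hω])
    _ = ∫ ω, (∫ y, φ y ∂(Q j (ξ j ω))) * Z ω ∂P := by simp_rw [mul_comm]

end Markov

section Core
variable {P : Measure Ω} [IsProbabilityMeasure P] {ξ : ∀ j, Ω → 𝒳 j}
  {Q : ∀ j, Kernel (𝒳 j) (𝒳 (j + 1))} [∀ j, IsMarkovKernel (Q j)]

lemma sum_Icc_shift (n m : ℕ) (hnm : n ≤ m) (F : ℕ → ℝ) :
    ∑ j ∈ Finset.Icc n m, F j = F n + ∑ j ∈ Finset.Ico n m, F (j + 1) := by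
  rw [← Finset.Ico_add_one_right_eq_Icc, Finset.sum_eq_sum_Ico_succ_bot (b := m + 1) (Nat.lt_succ_of_le hnm)]
  congr 1
  rw [← Finset.map_add_right_Ico n m 1, Finset.sum_map]
  rfl

set_option maxHeartbeats 2000000 in
lemma core_var_bounds (hξ : ∀ j, Measurable (ξ j))
    (hMarkov : ∀ (j : ℕ) (B : Set (𝒳 (j + 1))), MeasurableSet B →
      (P[fun ω => B.indicator (fun _ => (1 : ℝ)) (ξ (j + 1) ω) | chainFilt ξ j]) =ᵐ[P]
        fun ω => ((Q j) (ξ j ω) B).toReal)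
    {r : ℝ} (hr0 : 0 ≤ r) (hr1 : r < 1)
    (hcontr : ∀ (j : ℕ) (φ : 𝒳 (j + 1) → ℝ), Measurable φ →
      MemLp (fun ω => φ (ξ (j + 1) ω)) 2 P → (∫ ω, φ (ξ (j + 1) ω) ∂P) = 0 →
      eLpNorm (fun ω => ∫ y, φ y ∂((Q j) (ξ j ω))) 2 P ≤
        ENNReal.ofReal r * eLpNorm (fun ω => φ (ξ (j + 1) ω)) 2 P)
    (n m : ℕ) (hnm : n ≤ m) (g : ∀ j, 𝒳 j → ℝ) (hg : ∀ j, Measurable (g j))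
    {c : ℝ} (hc0 : 0 ≤ c) (hgb : ∀ j x, |g j x| ≤ c) (hgc : ∀ j, ∫ ω, g j (ξ j ω) ∂P = 0) :
    (1 - r ^ 2) / 4 * (∑ j ∈ Finset.Icc n m, ∫ ω, (g j (ξ j ω)) ^ 2 ∂P)
      ≤ ∫ ω, (∑ j ∈ Finset.Icc n m, g j (ξ j ω)) ^ 2 ∂P
    ∧ (1 - r) ^ 2 * (∫ ω, (∑ j ∈ Finset.Icc n m, g j (ξ j ω)) ^ 2 ∂P)
      ≤ ∑ j ∈ Finset.Icc n m, ∫ ω, (g j (ξ j ω)) ^ 2 ∂P := by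
  -- the corrector functions
  set G : ∀ i, 𝒳 i → ℝ := Gaux Q g m with hGdef
  have hGmeas : ∀ i, Measurable (G i) := Gaux_measurable Q g hg m
  set cG : ℝ := (m + 1 : ℕ) * c with hcGdef
  have hcG0 : 0 ≤ cG := mul_nonneg (by positivity) hc0
  have hGb : ∀ i x, |G i x| ≤ cG := by
    intro i x
    refine (Gaux_bound Q g c hgb m i x).trans ?_
    have : ((m + 1 - i : ℕ) : ℝ) ≤ ((m + 1 : ℕ) : ℝ) := by exact_mod_cast Nat.sub_le _ _
    exact mul_le_mul_of_nonneg_right this hc0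
  -- the conditioned correctors
  set QG : ∀ j, Ω → ℝ := fun j ω => ∫ y, G (j + 1) y ∂(Q j (ξ j ω)) with hQGdef
  have hQGψmeas : ∀ j, Measurable fun x => ∫ y, G (j + 1) y ∂(Q j x) := fun j =>
    (MeasureTheory.StronglyMeasurable.integral_kernel_prod_right
      (κ := Q j) (f := fun _ y => G (j + 1) y)
      ((hGmeas (j + 1)).stronglyMeasurable.comp_measurable measurable_snd)).measurable
  have hQGmeas : ∀ j, Measurable (QG j) := fun j => (hQGψmeas j).comp (hξ j)
  have hQGb : ∀ j ω, |QG j ω| ≤ cG := fun j ω => by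
    have := norm_integral_le_of_norm_le_const (μ := Q j (ξ j ω))
      (f := fun y => G (j + 1) y) (C := cG)
      (ae_of_all _ fun y => by simpa [Real.norm_eq_abs] using hGb (j + 1) y)
    simpa [Real.norm_eq_abs, measure_univ] using this
  -- integrability helpers
  have hInt : ∀ (h : Ω → ℝ) (cc : ℝ), Measurable h → (∀ ω, |h ω| ≤ cc) → Integrable h P :=
    fun h cc hm hb => integrable_of_abs_le hm.aestronglyMeasurable hb
  have hIntMul : ∀ (h₁ h₂ : Ω → ℝ) (c₁ c₂ : ℝ), Measurable h₁ → Measurable h₂ →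
      (∀ ω, |h₁ ω| ≤ c₁) → (∀ ω, |h₂ ω| ≤ c₂) →
      Integrable (fun ω => h₁ ω * h₂ ω) P := by
    intro h₁ h₂ c₁ c₂ hm₁ hm₂ hb₁ hb₂
    refine hInt _ (|c₁| * |c₂|) (hm₁.mul hm₂) fun ω => ?_
    rw [abs_mul]
    exact mul_le_mul ((hb₁ ω).trans (le_abs_self _)) ((hb₂ ω).trans (le_abs_self _))
      (abs_nonneg _) (abs_nonneg _)
  -- centering of the correctors
  have hGcent : ∀ i, ∫ ω, G i (ξ i ω) ∂P = 0 := by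
    suffices H : ∀ t i, m + 1 - i ≤ t → ∫ ω, G i (ξ i ω) ∂P = 0 by
      exact fun i => H (m + 1 - i) i le_rfl
    intro t
    induction t with
    | zero =>
      intro i hi
      have h : m < i := by omega
      simp [hGdef, Gaux_of_top Q g h]
    | succ t ih =>
      intro i hi
      by_cases h : m < i
      · simp [hGdef, Gaux_of_top Q g h]
      · have h' : i ≤ m := Nat.not_lt.mp h
        have heq : ∀ ω, G i (ξ i ω) = g i (ξ i ω) + QG i ω := fun ω =>
          Gaux_of_le Q g h' (ξ i ω)
        have hQint : ∫ ω, QG i ω ∂P = ∫ ω, G (i + 1) (ξ (i + 1) ω) ∂P := by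
          have := markov_pullout hξ hMarkov i (hGmeas (i + 1)) (hGb (i + 1))
            (Z := fun _ => (1 : ℝ)) (stronglyMeasurable_const) (cZ := 1)
            (fun ω => by norm_num)
          simpa using this.symm
        simp_rw [heq]
        rw [integral_add (hInt (fun ω => g i (ξ i ω)) c ((hg i).comp (hξ i)) (fun ω => hgb i _))
          (hInt (fun ω => QG i ω) cG (hQGmeas i) (fun ω => hQGb i ω))]
        rw [hgc i, hQint, ih (i + 1) (by omega)]
        ring
  -- L² quantities
  set α : ℕ → ℝ := fun i => (eLpNorm (fun ω => G i (ξ i ω)) 2 P).toReal with hαdef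
  set β : ℕ → ℝ := fun j => (eLpNorm (QG j) 2 P).toReal with hβdef
  set σ : ℕ → ℝ := fun j => (eLpNorm (fun ω => g j (ξ j ω)) 2 P).toReal with hσdef
  have hMemG : ∀ i, MemLp (fun ω => G i (ξ i ω)) 2 P := fun i =>
    MemLp.of_bound ((hGmeas i).comp (hξ i)).aestronglyMeasurable cG
      (ae_of_all _ fun ω => by simpa [Real.norm_eq_abs] using hGb i (ξ i ω))
  have hMemQG : ∀ j, MemLp (QG j) 2 P := fun j =>
    MemLp.of_bound (hQGmeas j).aestronglyMeasurable cG
      (ae_of_all _ fun ω => by simpa [Real.norm_eq_abs] using hQGb j ω)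
  have hMemg : ∀ j, MemLp (fun ω => g j (ξ j ω)) 2 P := fun j =>
    MemLp.of_bound ((hg j).comp (hξ j)).aestronglyMeasurable c
      (ae_of_all _ fun ω => by simpa [Real.norm_eq_abs] using hgb j (ξ j ω))
  have hα0 : ∀ i, 0 ≤ α i := fun i => ENNReal.toReal_nonneg
  have hβ0 : ∀ j, 0 ≤ β j := fun j => ENNReal.toReal_nonneg
  have hσ0 : ∀ j, 0 ≤ σ j := fun j => ENNReal.toReal_nonneg
  -- squares as integrals
  have hsqG : ∀ i, ∫ ω, (G i (ξ i ω)) ^ 2 ∂P = α i ^ 2 := fun i =>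
    integral_sq_eq_toReal ((hMemG i).integrable_sq)
  have hsqQG : ∀ j, ∫ ω, (QG j ω) ^ 2 ∂P = β j ^ 2 := fun j =>
    integral_sq_eq_toReal ((hMemQG j).integrable_sq)
  have hsqg : ∀ j, ∫ ω, (g j (ξ j ω)) ^ 2 ∂P = σ j ^ 2 := fun j =>
    integral_sq_eq_toReal ((hMemg j).integrable_sq)
  -- contraction in real form
  have hβα : ∀ j, β j ≤ r * α (j + 1) := by
    intro j
    have h1 := hcontr j (G (j + 1)) (hGmeas (j + 1)) (hMemG (j + 1)) (hGcent (j + 1))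
    have h2 : eLpNorm (fun ω => G (j + 1) (ξ (j + 1) ω)) 2 P ≠ ⊤ := (hMemG (j + 1)).eLpNorm_ne_top
    have h3 : ENNReal.ofReal r * eLpNorm (fun ω => G (j + 1) (ξ (j + 1) ω)) 2 P ≠ ⊤ :=
      ENNReal.mul_ne_top ENNReal.ofReal_ne_top h2
    have h4 := ENNReal.toReal_mono h3 h1
    rwa [ENNReal.toReal_mul, ENNReal.toReal_ofReal hr0] at h4
  -- triangle inequalities
  have htri : ∀ j, j ≤ m → σ j ≤ α j + β j ∧ α j ≤ σ j + β j := by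
    intro j hj
    have heq : (fun ω => g j (ξ j ω))
        = (fun ω => G j (ξ j ω)) + (-(QG j)) := by
      funext ω
      have := Gaux_of_le Q g hj (ξ j ω)
      simp only [Pi.add_apply, Pi.neg_apply]
      rw [show G j (ξ j ω) = g j (ξ j ω) + QG j ω from this]
      ring
    have heq2 : (fun ω => G j (ξ j ω))
        = (fun ω => g j (ξ j ω)) + (fun ω => QG j ω) := by
      funext ω
      exact Gaux_of_le Q g hj (ξ j ω)
    constructor
    · have h1 : eLpNorm (fun ω => g j (ξ j ω)) 2 P
          ≤ eLpNorm (fun ω => G j (ξ j ω)) 2 P + eLpNorm (-(QG j)) 2 P := by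
        rw [heq]
        exact eLpNorm_add_le ((hGmeas j).comp (hξ j)).aestronglyMeasurable
          ((hQGmeas j).neg.aestronglyMeasurable) one_le_two
      have h2 := ENNReal.toReal_mono
        (ENNReal.add_ne_top.mpr ⟨(hMemG j).eLpNorm_ne_top, by
          rw [eLpNorm_neg]; exact (hMemQG j).eLpNorm_ne_top⟩) h1
      rw [ENNReal.toReal_add (hMemG j).eLpNorm_ne_top (by
        rw [eLpNorm_neg]; exact (hMemQG j).eLpNorm_ne_top)] at h2
      rw [eLpNorm_neg] at h2
      exact h2
    · have h1 : eLpNorm (fun ω => G j (ξ j ω)) 2 P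
          ≤ eLpNorm (fun ω => g j (ξ j ω)) 2 P + eLpNorm (QG j) 2 P := by
        rw [heq2]
        exact eLpNorm_add_le ((hg j).comp (hξ j)).aestronglyMeasurable
          (hQGmeas j).aestronglyMeasurable one_le_two
      have h2 := ENNReal.toReal_mono
        (ENNReal.add_ne_top.mpr ⟨(hMemg j).eLpNorm_ne_top, (hMemQG j).eLpNorm_ne_top⟩) h1
      rwa [ENNReal.toReal_add (hMemg j).eLpNorm_ne_top (hMemQG j).eLpNorm_ne_top] at h2
  -- the martingale-difference terms
  set W : Ω → ℝ := fun ω => G n (ξ n ω) with hWdef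
  set D : ℕ → Ω → ℝ := fun j ω => G (j + 1) (ξ (j + 1) ω) - QG j ω with hDdef
  have hWmeas : Measurable W := (hGmeas n).comp (hξ n)
  have hWb : ∀ ω, |W ω| ≤ cG := fun ω => hGb n (ξ n ω)
  have hDmeas : ∀ j, Measurable (D j) := fun j =>
    ((hGmeas (j + 1)).comp (hξ (j + 1))).sub (hQGmeas j)
  have hDb : ∀ j ω, |D j ω| ≤ cG + cG := fun j ω =>
    (abs_sub _ _).trans (add_le_add (hGb (j + 1) (ξ (j + 1) ω)) (hQGb j ω))
  -- telescoping identity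
  have htel : ∀ ω, ∑ j ∈ Finset.Icc n m, g j (ξ j ω)
      = W ω + ∑ j ∈ Finset.Ico n m, D j ω := by
    intro ω
    have e1 : ∑ j ∈ Finset.Icc n m, g j (ξ j ω)
        = (∑ j ∈ Finset.Icc n m, G j (ξ j ω)) - ∑ j ∈ Finset.Icc n m, QG j ω := by
      rw [← Finset.sum_sub_distrib]
      refine Finset.sum_congr rfl fun j hj => ?_
      have := Gaux_of_le Q g (Finset.mem_Icc.mp hj).2 (ξ j ω)
      rw [show G j (ξ j ω) = g j (ξ j ω) + QG j ω from this]
      ring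
    have e2 : ∑ j ∈ Finset.Icc n m, G j (ξ j ω)
        = W ω + ∑ j ∈ Finset.Ico n m, G (j + 1) (ξ (j + 1) ω) :=
      sum_Icc_shift n m hnm (fun j => G j (ξ j ω))
    have e3 : ∑ j ∈ Finset.Icc n m, QG j ω
        = (∑ j ∈ Finset.Ico n m, QG j ω) + QG m ω := by
      rw [← Finset.Ico_add_one_right_eq_Icc, Finset.sum_Ico_succ_top hnm]
    have e4 : QG m ω = 0 := by
      have : ∀ y, G (m + 1) y = 0 := fun y => Gaux_of_top Q g (Nat.lt_succ_self m) y
      simp only [hQGdef]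
      simp [this]
    rw [e1, e2, e3, e4, hDdef]
    rw [Finset.sum_sub_distrib]
    ring
  -- orthogonality
  have hOrth : ∀ j, ∀ (Z : Ω → ℝ), StronglyMeasurable[chainFilt ξ j] Z → ∀ (cZ : ℝ),
      (∀ ω, |Z ω| ≤ cZ) → ∫ ω, D j ω * Z ω ∂P = 0 := by
    intro j Z hZ cZ hZb
    have h1 : ∫ ω, G (j + 1) (ξ (j + 1) ω) * Z ω ∂P = ∫ ω, QG j ω * Z ω ∂P :=
      markov_pullout hξ hMarkov j (hGmeas (j + 1)) (hGb (j + 1)) hZ hZb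
    have e : ∀ ω, D j ω * Z ω = G (j + 1) (ξ (j + 1) ω) * Z ω - QG j ω * Z ω := fun ω => by
      simp only [hDdef]; ring
    simp_rw [e]
    rw [integral_sub
      (hIntMul (fun ω => G (j + 1) (ξ (j + 1) ω)) Z cG cZ ((hGmeas (j + 1)).comp (hξ (j + 1))) ((hZ.mono (chainFilt_le hξ j)).measurable) (fun ω => hGb _ _) hZb)
      (hIntMul (fun ω => QG j ω) Z cG cZ (hQGmeas j) ((hZ.mono (chainFilt_le hξ j)).measurable) (fun ω => hQGb _ _) hZb)]
    rw [h1]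
    ring
  have hWD : ∀ j ∈ Finset.Ico n m, ∫ ω, W ω * D j ω ∂P = 0 := by
    intro j hj
    have hnj : n ≤ j := (Finset.mem_Ico.mp hj).1
    have := hOrth j W (stronglyMeasurable_chainFilt hnj (hGmeas n)) cG hWb
    rw [← this]
    simp_rw [mul_comm]
  have hDD : ∀ j k, k < j → ∫ ω, D j ω * D k ω ∂P = 0 := by
    intro j k hkj
    refine hOrth j (D k) ?_ (cG + cG) (hDb k)
    exact (stronglyMeasurable_chainFilt hkj (hGmeas (k + 1))).sub
      (stronglyMeasurable_chainFilt (Nat.le_of_lt hkj) (hQGψmeas k))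
  -- second moment of the D's
  have hD2 : ∀ j, ∫ ω, (D j ω) ^ 2 ∂P = α (j + 1) ^ 2 - β j ^ 2 := by
    intro j
    have hcross : ∫ ω, G (j + 1) (ξ (j + 1) ω) * QG j ω ∂P = ∫ ω, QG j ω * QG j ω ∂P := by
      have := markov_pullout hξ hMarkov j (hGmeas (j + 1)) (hGb (j + 1))
        (Z := QG j) (stronglyMeasurable_chainFilt le_rfl (hQGψmeas j)) (hQGb j)
      exact this
    have e : ∀ ω, (D j ω) ^ 2
        = G (j + 1) (ξ (j + 1) ω) ^ 2 - 2 * (G (j + 1) (ξ (j + 1) ω) * QG j ω)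
          + QG j ω * QG j ω := fun ω => by
      simp only [hDdef]; ring
    simp_rw [e]
    rw [integral_add, integral_sub, integral_const_mul, hcross]
    · have h1 : ∫ ω, QG j ω * QG j ω ∂P = β j ^ 2 := by
        rw [← hsqQG j]; congr 1; funext ω; ring
      rw [h1, ← hsqG (j + 1)]
      ring
    · exact (hMemG (j + 1)).integrable_sq
    · refine (hIntMul (fun ω => G (j + 1) (ξ (j + 1) ω)) (fun ω => QG j ω) cG cG ((hGmeas (j + 1)).comp (hξ (j + 1))) (hQGmeas j)
        (fun ω => hGb _ _) (fun ω => hQGb _ _)).const_mul 2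
    · exact Integrable.sub (hMemG (j + 1)).integrable_sq
        ((hIntMul (fun ω => G (j + 1) (ξ (j + 1) ω)) (fun ω => QG j ω) cG cG ((hGmeas (j + 1)).comp (hξ (j + 1))) (hQGmeas j)
          (fun ω => hGb _ _) (fun ω => hQGb _ _)).const_mul 2)
    · exact hIntMul (fun ω => QG j ω) (fun ω => QG j ω) cG cG (hQGmeas j) (hQGmeas j) (fun ω => hQGb _ _) (fun ω => hQGb _ _)
  -- integrabilities for the expansion
  have IW2 : Integrable (fun ω => W ω ^ 2) P := by
    have := hIntMul W W cG cG hWmeas hWmeas hWb hWb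
    simpa [pow_two] using this
  have IWD : ∀ j, Integrable (fun ω => W ω * D j ω) P := fun j =>
    hIntMul W (D j) cG (cG + cG) hWmeas (hDmeas j) hWb (hDb j)
  have IDD : ∀ j k, Integrable (fun ω => D j ω * D k ω) P := fun j k =>
    hIntMul (D j) (D k) (cG + cG) (cG + cG) (hDmeas j) (hDmeas k) (hDb j) (hDb k)
  have hexp : ∀ ω, (W ω + ∑ j ∈ Finset.Ico n m, D j ω) ^ 2
      = W ω ^ 2 + (2 * (∑ j ∈ Finset.Ico n m, W ω * D j ω)
        + ∑ j ∈ Finset.Ico n m, ∑ k ∈ Finset.Ico n m, D j ω * D k ω) := by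
    intro ω
    rw [← Finset.mul_sum, ← Finset.sum_mul_sum]
    ring
  have hsum1 : Integrable (fun ω => ∑ j ∈ Finset.Ico n m, W ω * D j ω) P :=
    integrable_finset_sum _ fun j _ => IWD j
  have hsum2 : Integrable (fun ω => ∑ j ∈ Finset.Ico n m, ∑ k ∈ Finset.Ico n m,
      D j ω * D k ω) P :=
    integrable_finset_sum _ fun j _ => integrable_finset_sum _ fun k _ => IDD j k
  have hES : ∫ ω, (W ω + ∑ j ∈ Finset.Ico n m, D j ω) ^ 2 ∂P
      = ∫ ω, W ω ^ 2 ∂P + ∑ j ∈ Finset.Ico n m, ∫ ω, (D j ω) ^ 2 ∂P := by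
    simp_rw [hexp]
    have hI2a : Integrable (fun ω => 2 * ∑ j ∈ Finset.Ico n m, W ω * D j ω) P :=
      hsum1.const_mul 2
    have hI2 : Integrable (fun ω => 2 * ∑ j ∈ Finset.Ico n m, W ω * D j ω
        + ∑ j ∈ Finset.Ico n m, ∑ k ∈ Finset.Ico n m, D j ω * D k ω) P :=
      hI2a.add hsum2
    rw [integral_add IW2 hI2, integral_add hI2a hsum2, integral_const_mul,
      integral_finset_sum _ (fun j _ => IWD j),
      integral_finset_sum _ (fun j _ => integrable_finset_sum _ fun k _ => IDD j k)]
    have hz1 : ∑ j ∈ Finset.Ico n m, ∫ ω, W ω * D j ω ∂P = 0 :=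
      Finset.sum_eq_zero fun j hj => hWD j hj
    have hz2 : ∀ j ∈ Finset.Ico n m,
        (∫ ω, ∑ k ∈ Finset.Ico n m, D j ω * D k ω ∂P) = ∫ ω, (D j ω) ^ 2 ∂P := by
      intro j hj
      rw [integral_finset_sum _ (fun k _ => IDD j k)]
      rw [Finset.sum_eq_single_of_mem j hj]
      · congr 1; funext ω; ring
      · intro k _ hne
        rcases lt_or_gt_of_ne hne with hk | hk
        · exact hDD j k hk
        · calc ∫ ω, D j ω * D k ω ∂P = ∫ ω, D k ω * D j ω ∂P := by simp_rw [mul_comm]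
            _ = 0 := hDD k j hk
    rw [hz1, Finset.sum_congr rfl hz2]
    ring
  -- the value of the second moment of the sum
  have hES2 : ∫ ω, (∑ j ∈ Finset.Icc n m, g j (ξ j ω)) ^ 2 ∂P
      = α n ^ 2 + ∑ j ∈ Finset.Ico n m, (α (j + 1) ^ 2 - β j ^ 2) := by
    have h0 : (fun ω => (∑ j ∈ Finset.Icc n m, g j (ξ j ω)) ^ 2)
        = fun ω => (W ω + ∑ j ∈ Finset.Ico n m, D j ω) ^ 2 := by
      funext ω; rw [htel ω]
    rw [h0, hES]
    have hW2 : ∫ ω, W ω ^ 2 ∂P = α n ^ 2 := hsqG n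
    rw [hW2, Finset.sum_congr rfl fun j _ => hD2 j]
  -- arithmetic summary
  set A : ℝ := ∑ i ∈ Finset.Icc n m, α i ^ 2 with hAdef
  have hA0 : 0 ≤ A := Finset.sum_nonneg fun i _ => sq_nonneg _
  have hαtop : α (m + 1) = 0 := by
    have hz : (fun ω => G (m + 1) (ξ (m + 1) ω)) = fun _ => (0 : ℝ) := by
      funext ω; exact Gaux_of_top Q g (Nat.lt_succ_self m) _
    simp [hαdef, hz]
  have hAshift : A = α n ^ 2 + ∑ j ∈ Finset.Ico n m, α (j + 1) ^ 2 :=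
    sum_Icc_shift n m hnm (fun i => α i ^ 2)
  have hshiftle : ∑ j ∈ Finset.Icc n m, α (j + 1) ^ 2 ≤ A := by
    have h1 : ∑ j ∈ Finset.Icc n m, α (j + 1) ^ 2
        = (∑ j ∈ Finset.Ico n m, α (j + 1) ^ 2) + α (m + 1) ^ 2 := by
      rw [← Finset.Ico_add_one_right_eq_Icc, Finset.sum_Ico_succ_top hnm]
    rw [h1, hαtop]
    have := sq_nonneg (α n)
    rw [hAshift]
    linarith
  set ES2 : ℝ := ∫ ω, (∑ j ∈ Finset.Icc n m, g j (ξ j ω)) ^ 2 ∂P with hES2def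
  have hup : ES2 ≤ A := by
    rw [hES2, hAshift]
    have : ∀ j ∈ Finset.Ico n m, α (j + 1) ^ 2 - β j ^ 2 ≤ α (j + 1) ^ 2 := fun j _ => by
      nlinarith [sq_nonneg (β j)]
    have hsle := Finset.sum_le_sum this
    linarith
  have hlowA : (1 - r ^ 2) * A ≤ ES2 := by
    rw [hES2, hAshift]
    have hterm : ∀ j ∈ Finset.Ico n m,
        (1 - r ^ 2) * α (j + 1) ^ 2 ≤ α (j + 1) ^ 2 - β j ^ 2 := by
      intro j _
      have h1 := hβα j
      have h2 := hβ0 j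
      have h3 := hα0 (j + 1)
      nlinarith
    have hsle := Finset.sum_le_sum hterm
    rw [← Finset.mul_sum] at hsle
    have hn : (1 - r ^ 2) * α n ^ 2 ≤ α n ^ 2 := by nlinarith [sq_nonneg (α n), sq_nonneg r]
    have : (1 - r ^ 2) * (α n ^ 2 + ∑ j ∈ Finset.Ico n m, α (j + 1) ^ 2)
        = (1 - r ^ 2) * α n ^ 2 + (1 - r ^ 2) * ∑ j ∈ Finset.Ico n m, α (j + 1) ^ 2 := by ring
    rw [this]
    linarith
  set Sσ : ℝ := ∑ j ∈ Finset.Icc n m, σ j ^ 2 with hSσdef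
  have hSσle : Sσ ≤ 4 * A := by
    have hterm : ∀ j ∈ Finset.Icc n m, σ j ^ 2 ≤ 2 * α j ^ 2 + 2 * α (j + 1) ^ 2 := by
      intro j hj
      have hjm := (Finset.mem_Icc.mp hj).2
      have h1 := (htri j hjm).1
      have h2 := hβα j
      have h3 := hβ0 j
      have h4 := hα0 j
      have h5 := hα0 (j + 1)
      have h6 := hσ0 j
      have hb' : β j ≤ α (j + 1) := h2.trans (by nlinarith)
      have hsum : σ j ≤ α j + α (j + 1) := h1.trans (by linarith)
      nlinarith [mul_self_le_mul_self h6 hsum, sq_nonneg (α j - α (j + 1))]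
    have hsle := Finset.sum_le_sum hterm
    have hsplit : ∑ j ∈ Finset.Icc n m, (2 * α j ^ 2 + 2 * α (j + 1) ^ 2)
        = 2 * A + 2 * ∑ j ∈ Finset.Icc n m, α (j + 1) ^ 2 := by
      rw [Finset.sum_add_distrib, ← Finset.mul_sum, ← Finset.mul_sum]
    rw [hSσdef]
    rw [hsplit] at hsle
    linarith
  have hASσ : (1 - r) ^ 2 * A ≤ Sσ := by
    have hterm : ∀ j ∈ Finset.Icc n m,
        (1 - r) * α j ^ 2 ≤ σ j ^ 2 + (1 - r) * r * α (j + 1) ^ 2 := by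
      intro j hj
      have hjm := (Finset.mem_Icc.mp hj).2
      have h1 := (htri j hjm).2
      have h2 := hβα j
      have h3 := hβ0 j
      have h4 := hα0 j
      have h5 := hα0 (j + 1)
      have h6 := hσ0 j
      have ha : α j ≤ σ j + r * α (j + 1) := h1.trans (by linarith)
      nlinarith [mul_self_le_mul_self h4 ha, mul_nonneg hr0 (sq_nonneg (σ j - (1 - r) * α (j + 1)))]
    have hsle := Finset.sum_le_sum hterm
    have hL : ∑ j ∈ Finset.Icc n m, (1 - r) * α j ^ 2 = (1 - r) * A := by
      rw [← Finset.mul_sum]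
    have hR : ∑ j ∈ Finset.Icc n m, (σ j ^ 2 + (1 - r) * r * α (j + 1) ^ 2)
        = Sσ + (1 - r) * r * ∑ j ∈ Finset.Icc n m, α (j + 1) ^ 2 := by
      rw [Finset.sum_add_distrib, ← Finset.mul_sum]
    rw [hL, hR] at hsle
    have hrr : 0 ≤ (1 - r) * r := mul_nonneg (by linarith) hr0
    have h7 : (1 - r) * r * (∑ j ∈ Finset.Icc n m, α (j + 1) ^ 2) ≤ (1 - r) * r * A :=
      mul_le_mul_of_nonneg_left hshiftle hrr
    nlinarith
  -- conclusions
  have hSg : ∑ j ∈ Finset.Icc n m, ∫ ω, (g j (ξ j ω)) ^ 2 ∂P = Sσ :=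
    Finset.sum_congr rfl fun j _ => hsqg j
  have hr2 : r ^ 2 ≤ 1 := by nlinarith
  constructor
  · rw [hSg]
    have h01 : (0 : ℝ) ≤ (1 - r ^ 2) / 4 := by linarith
    have h02 := mul_le_mul_of_nonneg_left hSσle h01
    nlinarith [h02, hlowA]
  · rw [hSg]
    have h02 := mul_le_mul_of_nonneg_left hup (sq_nonneg (1 - r))
    linarith [h02, hASσ]

end Core

lemma variance_eq_integral_sq_sub {P : Measure Ω} [IsProbabilityMeasure P] {X : Ω → ℝ} {cX : ℝ}
    (hm : Measurable X) (hb : ∀ ω, |X ω| ≤ cX) :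
    variance X P = ∫ ω, (X ω - ∫ ω', X ω' ∂P) ^ 2 ∂P := by
  have hmem : MemLp X 2 P := MemLp.of_bound hm.aestronglyMeasurable cX
    (ae_of_all _ fun ω => by simpa [Real.norm_eq_abs] using hb ω)
  have hXint : Integrable X P := integrable_of_abs_le hm.aestronglyMeasurable hb
  have hX2int : Integrable (fun ω => X ω ^ 2) P := hmem.integrable_sq
  set c : ℝ := ∫ ω', X ω' ∂P with hc
  have he : ∀ ω, (X ω - c) ^ 2 = X ω ^ 2 - 2 * c * X ω + c ^ 2 := fun ω => by ring
  rw [variance_eq_sub hmem]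
  simp_rw [he]
  have hI1 : Integrable (fun ω => X ω ^ 2 - 2 * c * X ω) P := hX2int.sub (hXint.const_mul (2 * c))
  rw [integral_add hI1 (integrable_const _),
    integral_sub hX2int (hXint.const_mul (2 * c)), integral_const, integral_const_mul]
  simp only [measure_univ, probReal_univ, ENNReal.toReal_one, smul_eq_mul, one_mul, Pi.pow_apply]
  rw [← hc]
  ring

set_option maxHeartbeats 1000000 in
theorem assumptionV_rho_contracting_chain'
    {Ω : Type*} [MeasurableSpace Ω] (P : Measure Ω) [IsProbabilityMeasure P]
    {𝒳 : ℕ → Type*} [∀ j, MeasurableSpace (𝒳 j)]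
    (ξ : ∀ j, Ω → 𝒳 j) (hξ : ∀ j, Measurable (ξ j))
    (Q : ∀ j, Kernel (𝒳 j) (𝒳 (j + 1)))
    (hQmk : ∀ j, IsMarkovKernel (Q j))
    (hMarkov : ∀ (j : ℕ) (B : Set (𝒳 (j + 1))), MeasurableSet B →
      (P[fun ω => B.indicator (fun _ => (1 : ℝ)) (ξ (j + 1) ω) |
          ⨆ i ∈ Set.Iic j, MeasurableSpace.comap (ξ i) inferInstance]) =ᵐ[P]
        fun ω => ((Q j) (ξ j ω) B).toReal)
    (ρ : ℝ) (hρ : ρ < 1)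
    (hcontr : ∀ (j : ℕ) (g : 𝒳 (j + 1) → ℝ), Measurable g →
      MemLp (fun ω => g (ξ (j + 1) ω)) 2 P →
      (∫ ω, g (ξ (j + 1) ω) ∂P) = 0 →
      eLpNorm (fun ω => ∫ y, g y ∂((Q j) (ξ j ω))) 2 P ≤
        ENNReal.ofReal ρ * eLpNorm (fun ω => g (ξ (j + 1) ω)) 2 P)
    {d : ℕ} (f : ∀ j, 𝒳 j → EuclideanSpace ℝ (Fin d))
    (hf : ∀ j, Measurable (f j))
    (K : ℝ) (hK : ∀ j x, ‖f j x‖ ≤ K)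
    (C : ℝ) (hC : 1 ≤ C)
    (hEig : ∀ (j : ℕ) (u v : EuclideanSpace ℝ (Fin d)), ‖u‖ = 1 → ‖v‖ = 1 →
      variance (fun ω => (inner ℝ u (f j (ξ j ω)) : ℝ)) P ≤
        C * variance (fun ω => (inner ℝ v (f j (ξ j ω)) : ℝ)) P) :
    ∃ C₁ C₂ : ℝ, 1 ≤ C₁ ∧ 1 ≤ C₂ ∧
      ∀ n m : ℕ, n ≤ m →
        ENNReal.ofReal C₁ ≤ eLpNorm (fun ω => ∑ j ∈ Finset.Icc n m,
            (f j (ξ j ω) - ∫ ω', f j (ξ j ω') ∂P)) 2 P →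
        ∀ u v : EuclideanSpace ℝ (Fin d), ‖u‖ = 1 → ‖v‖ = 1 →
          variance (fun ω => (inner ℝ u (∑ j ∈ Finset.Icc n m,
              (f j (ξ j ω) - ∫ ω', f j (ξ j ω') ∂P)) : ℝ)) P ≤
            C₂ * variance (fun ω => (inner ℝ v (∑ j ∈ Finset.Icc n m,
              (f j (ξ j ω) - ∫ ω', f j (ξ j ω') ∂P)) : ℝ)) P := by
  classical
  haveI : ∀ j, IsMarkovKernel (Q j) := hQmk
  have hΩ : Nonempty Ω := by
    by_contra h
    have h0 : (Set.univ : Set Ω) = ∅ := Set.univ_eq_empty_iff.mpr (not_nonempty_iff.mp h)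
    have h1 : P Set.univ = 1 := measure_univ
    rw [h0] at h1
    simp at h1
  have hK0 : 0 ≤ K := le_trans (norm_nonneg _) (hK 0 (ξ 0 hΩ.some))
  set r : ℝ := max ρ 0 with hrdef
  have hr0 : 0 ≤ r := le_max_right _ _
  have hr1 : r < 1 := max_lt hρ one_pos
  have hp0 : (0 : ℝ) < (1 - r) ^ 2 := pow_pos (by linarith) 2
  have hq0 : (0 : ℝ) < 1 - r ^ 2 := by nlinarith
  have hpq : (0 : ℝ) < (1 - r) ^ 2 * (1 - r ^ 2) := mul_pos hp0 hq0
  have hcontr' : ∀ (j : ℕ) (φ : 𝒳 (j + 1) → ℝ), Measurable φ →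
      MemLp (fun ω => φ (ξ (j + 1) ω)) 2 P → (∫ ω, φ (ξ (j + 1) ω) ∂P) = 0 →
      eLpNorm (fun ω => ∫ y, φ y ∂((Q j) (ξ j ω))) 2 P ≤
        ENNReal.ofReal r * eLpNorm (fun ω => φ (ξ (j + 1) ω)) 2 P := by
    intro j φ hφm hmem hcent
    refine (hcontr j φ hφm hmem hcent).trans ?_
    exact mul_le_mul_left (ENNReal.ofReal_le_ofReal (le_max_left _ _)) _
  set C₂ : ℝ := max 1 (4 * C / ((1 - r) ^ 2 * (1 - r ^ 2))) with hC₂def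
  refine ⟨1, C₂, le_rfl, le_max_left _ _, ?_⟩
  intro n m hnm _ u v hu hv
  have hfmeas : ∀ j, Measurable fun ω => f j (ξ j ω) := fun j => (hf j).comp (hξ j)
  have hfint : ∀ j, Integrable (fun ω => f j (ξ j ω)) P := fun j =>
    (integrable_const K).mono' (hfmeas j).aestronglyMeasurable
      (ae_of_all _ fun ω => by simpa using hK j (ξ j ω))
  set gw : EuclideanSpace ℝ (Fin d) → ∀ j, 𝒳 j → ℝ :=
    fun w j x => (inner ℝ w (f j x) : ℝ) - ∫ ω, (inner ℝ w (f j (ξ j ω)) : ℝ) ∂P with hgwdef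
  have hXmeas : ∀ (w : EuclideanSpace ℝ (Fin d)) j,
      Measurable fun ω => (inner ℝ w (f j (ξ j ω)) : ℝ) := fun w j =>
    Measurable.inner measurable_const (hfmeas j)
  have hXb : ∀ (w : EuclideanSpace ℝ (Fin d)), ‖w‖ = 1 → ∀ j ω,
      |(inner ℝ w (f j (ξ j ω)) : ℝ)| ≤ K := by
    intro w hw j ω
    refine (abs_real_inner_le_norm w (f j (ξ j ω))).trans ?_
    rw [hw, one_mul]
    exact hK j _
  have hgwmeas : ∀ w j, Measurable (gw w j) := fun w j =>
    (Measurable.inner measurable_const (hf j)).sub measurable_const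
  have hgwb : ∀ (w : EuclideanSpace ℝ (Fin d)), ‖w‖ = 1 → ∀ j x, |gw w j x| ≤ K + K := by
    intro w hw j x
    have h1 : |(inner ℝ w (f j x) : ℝ)| ≤ K := by
      refine (abs_real_inner_le_norm w (f j x)).trans ?_
      rw [hw, one_mul]
      exact hK j x
    have h2 : |∫ ω, (inner ℝ w (f j (ξ j ω)) : ℝ) ∂P| ≤ K := by
      have := norm_integral_le_of_norm_le_const (μ := P)
        (f := fun ω => (inner ℝ w (f j (ξ j ω)) : ℝ)) (C := K)
        (ae_of_all _ fun ω => by simpa [Real.norm_eq_abs] using hXb w hw j ω)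
      simpa [Real.norm_eq_abs, measure_univ] using this
    exact (abs_sub _ _).trans (add_le_add h1 h2)
  have hXint : ∀ (w : EuclideanSpace ℝ (Fin d)), ‖w‖ = 1 → ∀ j,
      Integrable (fun ω => (inner ℝ w (f j (ξ j ω)) : ℝ)) P := fun w hw j =>
    integrable_of_abs_le (hXmeas w j).aestronglyMeasurable (hXb w hw j)
  have hgwcent : ∀ (w : EuclideanSpace ℝ (Fin d)), ‖w‖ = 1 → ∀ j,
      ∫ ω, gw w j (ξ j ω) ∂P = 0 := by
    intro w hw j
    simp only [hgwdef]
    rw [integral_sub (hXint w hw j) (integrable_const _), integral_const]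
    simp [measure_univ]
  have core_w := fun (w : EuclideanSpace ℝ (Fin d)) (hw : ‖w‖ = 1) =>
    core_var_bounds hξ hMarkov hr0 hr1 hcontr' n m hnm (gw w) (hgwmeas w)
      (by linarith : (0:ℝ) ≤ K + K) (hgwb w hw) (hgwcent w hw)
  -- variance identifications
  have hvarX : ∀ (w : EuclideanSpace ℝ (Fin d)), ‖w‖ = 1 → ∀ j,
      variance (fun ω => (inner ℝ w (f j (ξ j ω)) : ℝ)) P
        = ∫ ω, (gw w j (ξ j ω)) ^ 2 ∂P := fun w hw j =>
    variance_eq_integral_sq_sub (hXmeas w j) (hXb w hw j)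
  have hvarS : ∀ (w : EuclideanSpace ℝ (Fin d)), ‖w‖ = 1 →
      variance (fun ω => (inner ℝ w (∑ j ∈ Finset.Icc n m,
          (f j (ξ j ω) - ∫ ω', f j (ξ j ω') ∂P)) : ℝ)) P
        = ∫ ω, (∑ j ∈ Finset.Icc n m, gw w j (ξ j ω)) ^ 2 ∂P := by
    intro w hw
    have hptw : ∀ ω, (inner ℝ w (∑ j ∈ Finset.Icc n m,
        (f j (ξ j ω) - ∫ ω', f j (ξ j ω') ∂P)) : ℝ)
        = ∑ j ∈ Finset.Icc n m, gw w j (ξ j ω) := by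
      intro ω
      rw [inner_sum]
      refine Finset.sum_congr rfl fun j hj => ?_
      rw [inner_sub_right]
      congr 1
      exact (integral_inner (hfint j) w).symm
    rw [show (fun ω => (inner ℝ w (∑ j ∈ Finset.Icc n m,
        (f j (ξ j ω) - ∫ ω', f j (ξ j ω') ∂P)) : ℝ))
      = fun ω => ∑ j ∈ Finset.Icc n m, gw w j (ξ j ω) from funext hptw]
    have hSmeas : Measurable fun ω => ∑ j ∈ Finset.Icc n m, gw w j (ξ j ω) :=
      Finset.measurable_sum _ fun j _ => (hgwmeas w j).comp (hξ j)
    have hSb : ∀ ω, |∑ j ∈ Finset.Icc n m, gw w j (ξ j ω)|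
        ≤ ((Finset.Icc n m).card : ℝ) * (K + K) := by
      intro ω
      refine (Finset.abs_sum_le_sum_abs _ _).trans ?_
      have := Finset.sum_le_card_nsmul (Finset.Icc n m)
        (fun j => |gw w j (ξ j ω)|) (K + K) (fun j _ => hgwb w hw j (ξ j ω))
      rw [nsmul_eq_mul] at this
      exact this
    rw [variance_eq_integral_sq_sub hSmeas hSb]
    have hmean : ∫ ω', ∑ j ∈ Finset.Icc n m, gw w j (ξ j ω') ∂P = 0 := by
      rw [integral_finset_sum _ (fun j _ =>
        integrable_of_abs_le (h := fun ω' => gw w j (ξ j ω'))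
          ((hgwmeas w j).comp (hξ j)).aestronglyMeasurable
          (fun ω => hgwb w hw j (ξ j ω)))]
      simp [hgwcent w hw]
    simp_rw [hmean, sub_zero]
  -- put everything together
  rw [hvarS u hu, hvarS v hv]
  set Vu : ℝ := ∫ ω, (∑ j ∈ Finset.Icc n m, gw u j (ξ j ω)) ^ 2 ∂P with hVu
  set Vv : ℝ := ∫ ω, (∑ j ∈ Finset.Icc n m, gw v j (ξ j ω)) ^ 2 ∂P with hVv
  set Su : ℝ := ∑ j ∈ Finset.Icc n m, ∫ ω, (gw u j (ξ j ω)) ^ 2 ∂P with hSu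
  set Sv : ℝ := ∑ j ∈ Finset.Icc n m, ∫ ω, (gw v j (ξ j ω)) ^ 2 ∂P with hSv
  have hVv0 : 0 ≤ Vv := integral_nonneg fun ω => sq_nonneg _
  have hcu := (core_w u hu).2
  have hcv := (core_w v hv).1
  have hSuSv : Su ≤ C * Sv := by
    calc Su = ∑ j ∈ Finset.Icc n m, variance (fun ω => (inner ℝ u (f j (ξ j ω)) : ℝ)) P :=
          (Finset.sum_congr rfl fun j _ => (hvarX u hu j).symm)
      _ ≤ ∑ j ∈ Finset.Icc n m, C * variance (fun ω => (inner ℝ v (f j (ξ j ω)) : ℝ)) P :=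
          Finset.sum_le_sum fun j _ => hEig j u v hu hv
      _ = C * ∑ j ∈ Finset.Icc n m, variance (fun ω => (inner ℝ v (f j (ξ j ω)) : ℝ)) P :=
          (Finset.mul_sum _ _ _).symm
      _ = C * Sv := by rw [Finset.sum_congr rfl fun j _ => hvarX v hv j]
  -- numeric conclusion
  have h1 : (1 - r) ^ 2 * Vu ≤ Su := hcu
  have h2 : (1 - r ^ 2) / 4 * Sv ≤ Vv := hcv
  have hC0 : 0 ≤ C := by linarith
  have hchain : ((1 - r) ^ 2 * (1 - r ^ 2)) * Vu ≤ 4 * C * Vv := by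
    have e1 : (1 - r ^ 2) * ((1 - r) ^ 2 * Vu) ≤ (1 - r ^ 2) * Su :=
      mul_le_mul_of_nonneg_left h1 (le_of_lt hq0)
    have e2 : (1 - r ^ 2) * Su ≤ (1 - r ^ 2) * (C * Sv) :=
      mul_le_mul_of_nonneg_left hSuSv (le_of_lt hq0)
    have e3 : (1 - r ^ 2) * Sv ≤ 4 * Vv := by linarith
    have e4 : C * ((1 - r ^ 2) * Sv) ≤ C * (4 * Vv) :=
      mul_le_mul_of_nonneg_left e3 hC0
    nlinarith [e1, e2, e4]
  have hC2 : 4 * C ≤ C₂ * ((1 - r) ^ 2 * (1 - r ^ 2)) := by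
    have := le_max_right (1 : ℝ) (4 * C / ((1 - r) ^ 2 * (1 - r ^ 2)))
    rw [hC₂def]
    exact (div_le_iff₀ hpq).mp this
  have h3 : 4 * C * Vv ≤ C₂ * ((1 - r) ^ 2 * (1 - r ^ 2)) * Vv :=
    mul_le_mul_of_nonneg_right hC2 hVv0
  have h4 : ((1 - r) ^ 2 * (1 - r ^ 2)) * Vu
      ≤ ((1 - r) ^ 2 * (1 - r ^ 2)) * (C₂ * Vv) := by nlinarith [hchain, h3]
  exact le_of_mul_le_mul_left h4 hpq

end AuxiliaryLemmas

theorem assumptionV_rho_contracting_chain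
    {Ω : Type*} [MeasurableSpace Ω] (P : Measure Ω) [IsProbabilityMeasure P]
    {𝒳 : ℕ → Type*} [∀ j, MeasurableSpace (𝒳 j)]
    -- the Markov chain and its one-step transition kernels
    (ξ : ∀ j, Ω → 𝒳 j) (hξ : ∀ j, Measurable (ξ j))
    (Q : ∀ j, Kernel (𝒳 j) (𝒳 (j + 1)))
    (hQmk : ∀ j, IsMarkovKernel (Q j))
    -- Markov property: Q_j is the conditional law of ξ_{j+1} given ξ_0, …, ξ_j
    (hMarkov : ∀ (j : ℕ) (B : Set (𝒳 (j + 1))), MeasurableSet B →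
      (P[fun ω => B.indicator (fun _ => (1 : ℝ)) (ξ (j + 1) ω) |
          ⨆ i ∈ Set.Iic j, MeasurableSpace.comap (ξ i) inferInstance]) =ᵐ[P]
        fun ω => ((Q j) (ξ j ω) B).toReal)
    -- L² contraction: ρ = sup_j ρ_j < 1, where ρ_j is the L²-operator norm of Q_j
    -- restricted to zero-mean square-integrable functions of ξ_{j+1}
    (ρ : ℝ) (hρ : ρ < 1)
    (hcontr : ∀ (j : ℕ) (g : 𝒳 (j + 1) → ℝ), Measurable g →
      MemLp (fun ω => g (ξ (j + 1) ω)) 2 P →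
      (∫ ω, g (ξ (j + 1) ω) ∂P) = 0 →
      eLpNorm (fun ω => ∫ y, g y ∂((Q j) (ξ j ω))) 2 P ≤
        ENNReal.ofReal ρ * eLpNorm (fun ω => g (ξ (j + 1) ω)) 2 P)
    -- the uniformly bounded functionals X_j = f_j(ξ_j)
    {d : ℕ} (f : ∀ j, 𝒳 j → EuclideanSpace ℝ (Fin d))
    (hf : ∀ j, Measurable (f j))
    (K : ℝ) (hK : ∀ j x, ‖f j x‖ ≤ K)
    -- bounded eigenvalue ratio of Cov(X_j)
    (C : ℝ) (hC : 1 ≤ C)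
    (hEig : ∀ (j : ℕ) (u v : EuclideanSpace ℝ (Fin d)), ‖u‖ = 1 → ‖v‖ = 1 →
      variance (fun ω => (inner ℝ u (f j (ξ j ω)) : ℝ)) P ≤
        C * variance (fun ω => (inner ℝ v (f j (ξ j ω)) : ℝ)) P) :
    -- Assumption (V) for the sums S_{n,m} = ∑_{j=n}^m (X_j − E[X_j])
    ∃ C₁ C₂ : ℝ, 1 ≤ C₁ ∧ 1 ≤ C₂ ∧
      ∀ n m : ℕ, n ≤ m →
        ENNReal.ofReal C₁ ≤ eLpNorm (fun ω => ∑ j ∈ Finset.Icc n m,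
            (f j (ξ j ω) - ∫ ω', f j (ξ j ω') ∂P)) 2 P →
        ∀ u v : EuclideanSpace ℝ (Fin d), ‖u‖ = 1 → ‖v‖ = 1 →
          variance (fun ω => (inner ℝ u (∑ j ∈ Finset.Icc n m,
              (f j (ξ j ω) - ∫ ω', f j (ξ j ω') ∂P)) : ℝ)) P ≤
            C₂ * variance (fun ω => (inner ℝ v (∑ j ∈ Finset.Icc n m,
              (f j (ξ j ω) - ∫ ω', f j (ξ j ω') ∂P)) : ℝ)) P :=
  assumptionV_rho_contracting_chain' P ξ hξ Q hQmk hMarkov ρ hρ hcontr f hf K hK C hC hEig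

end
end
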